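/- arXiv:1906.04967 — 8 statements merged into one kernel-verified Lean document; each statement's English description precedes it below -/
import Mathlib

section
/- (BCH bound for constacyclic codes) Let C be a λ-constacyclic code of length m over F_q whose defining set contains a consecutive set E = {αξ^{e+zn} : 0 ≤ z ≤ δ-2} with gcd(m,n)=1 and δ ≥ 2. Then every nonzero codeword of C has Hamming weight at least δ. -/
open Polynomial

/-- (BCH bound for constacyclic codes.) If the defining set of a λ-constacyclic code
`C = ⟨g⟩` contains the consecutive set `E = {αξ^{e+zn} : 0 ≤ z ≤ δ-2}` with
`gcd(m,n) = 1` and `δ ≥ 2`, then every nonzero codeword has weight at least `δ`.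
A codeword is represented by its polynomial `c` of degree `< m` with `g ∣ c`. -/
theorem bch_bound_constacyclic
    (K : Type*) [Field K] [Fintype K] (m : ℕ) (hm : 0 < m)
    (hgcd : Nat.gcd m (Fintype.card K) = 1) (lam : K) (hlam : lam ≠ 0)
    (F : Type*) [Field F] [Algebra K F]
    (α ξ : F) (hα : α ^ m = algebraMap K F lam) (hξ : IsPrimitiveRoot ξ m)
    (g : Polynomial K) (hg : g ∣ (X : Polynomial K) ^ m - C lam)
    (e n δ : ℕ) (hn : 0 < n) (hδ : 2 ≤ δ) (hmn : Nat.gcd m n = 1)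
    (hE : ∀ z : ℕ, z ≤ δ - 2 → Polynomial.aeval (α * ξ ^ (e + z * n)) g = 0)
    (c : Polynomial K) (hc : c ≠ 0) (hcdeg : c.degree < m) (hcg : g ∣ c) :
    δ ≤ c.support.card := by
  by_contra hlt
  push_neg at hlt
  -- basic nonvanishing facts
  have hξ0 : ξ ≠ 0 := by
    intro h
    have := hξ.pow_eq_one
    rw [h, zero_pow hm.ne'] at this
    exact zero_ne_one this
  have hα0 : α ≠ 0 := by
    intro h
    rw [h, zero_pow hm.ne'] at hα
    exact hlam ((_root_.map_eq_zero _).mp hα.symm)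
  -- ξ powers reduce mod m
  have hpow : ∀ a : ℕ, ξ ^ a = ξ ^ (a % m) := by
    intro a
    conv_lhs => rw [← Nat.div_add_mod a m]
    rw [pow_add, pow_mul, hξ.pow_eq_one, one_pow, one_mul]
  -- support elements are < m
  have hsupp : ∀ i ∈ c.support, i < m := by
    intro i hi
    have h1 : i ≤ c.natDegree := le_natDegree_of_mem_supp i hi
    have h2 : c.natDegree < m := by
      rw [← Polynomial.natDegree_lt_iff_degree_lt hc] at hcdeg
      exact hcdeg
    omega
  set S := c.support with hS
  set w := S.card with hw
  have hw1 : 1 ≤ w := Finset.card_pos.mpr (Polynomial.nonempty_support_iff.mpr hc)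
  -- enumeration of the support
  let ι : Fin w → ℕ := fun k => ((S.equivFin.symm k : S) : ℕ)
  have hιmem : ∀ k, ι k ∈ S := fun k => (S.equivFin.symm k).2
  have hιinj : Function.Injective ι := by
    intro a b hab
    exact S.equivFin.symm.injective (Subtype.ext hab)
  -- the Vandermonde nodes
  let x : Fin w → F := fun k => ξ ^ (ι k * n)
  have hxinj : Function.Injective x := by
    intro a b hab
    apply hιinj
    have h1 : ξ ^ (ι a * n % m) = ξ ^ (ι b * n % m) := by
      rw [← hpow, ← hpow]; exact hab
    have h2 : ι a * n % m = ι b * n % m :=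
      hξ.pow_inj (Nat.mod_lt _ hm) (Nat.mod_lt _ hm) h1
    have h3 : ι a * n ≡ ι b * n [MOD m] := h2
    have h4 : ι a ≡ ι b [MOD m] := Nat.ModEq.cancel_right_of_coprime hmn h3
    have ha := hsupp _ (hιmem a)
    have hb := hsupp _ (hιmem b)
    have : ι a % m = ι b % m := h4
    rwa [Nat.mod_eq_of_lt ha, Nat.mod_eq_of_lt hb] at this
  -- the coefficient vector
  let v : Fin w → F := fun k =>
    algebraMap K F (c.coeff (ι k)) * (α ^ (ι k) * ξ ^ (ι k * e))
  -- c vanishes at each α ξ^(e+zn)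
  have hcroot : ∀ z : ℕ, z ≤ δ - 2 → Polynomial.aeval (α * ξ ^ (e + z * n)) c = 0 := by
    intro z hz
    obtain ⟨q, rfl⟩ := hcg
    rw [map_mul, hE z hz, zero_mul]
  -- the Vandermonde system
  have hzero : ∀ j : Fin w, (∑ k : Fin w, v k * x k ^ (j : ℕ)) = 0 := by
    intro j
    have hj : (j : ℕ) ≤ δ - 2 := by
      have := j.2
      omega
    have h0 := hcroot (j : ℕ) hj
    rw [Polynomial.aeval_def, Polynomial.eval₂_eq_sum, Polynomial.sum_def] at h0
    rw [← h0]
    rw [← Finset.sum_coe_sort S (fun i => algebraMap K F (c.coeff i) * (α * ξ ^ (e + (j:ℕ) * n)) ^ i)]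
    rw [← Equiv.sum_comp S.equivFin.symm
      (fun i : S => algebraMap K F (c.coeff (i : ℕ)) * (α * ξ ^ (e + (j:ℕ) * n)) ^ (i : ℕ))]
    apply Finset.sum_congr rfl
    intro k _
    show v k * x k ^ (j : ℕ) = algebraMap K F (c.coeff (ι k)) * (α * ξ ^ (e + (j:ℕ) * n)) ^ (ι k)
    simp only [v, x, mul_pow, ← pow_mul, mul_assoc, ← pow_add]
    congr 3
    ring
  have hv0 : v = 0 :=
    Matrix.eq_zero_of_forall_pow_sum_mul_pow_eq_zero hxinj hzero
  -- contradiction: some coefficient is nonzero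
  obtain ⟨i0, hi0⟩ := Polynomial.nonempty_support_iff.mpr hc
  set k0 : Fin w := S.equivFin ⟨i0, hi0⟩ with hk0
  have hvk0 : v k0 = 0 := congrFun hv0 k0
  have hι0 : ι k0 = i0 := by
    simp only [ι, k0, Equiv.symm_apply_apply]
  simp only [v] at hvk0
  rw [hι0] at hvk0
  have hc0 : c.coeff i0 ≠ 0 := Polynomial.mem_support_iff.mp hi0
  have hne : algebraMap K F (c.coeff i0) ≠ 0 := fun h => hc0 ((_root_.map_eq_zero _).mp h)
  rcases mul_eq_zero.mp hvk0 with h | h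
  · exact hne h
  · rcases mul_eq_zero.mp h with h' | h'
    · exact pow_ne_zero _ hα0 h'
    · exact pow_ne_zero _ hξ0 h'
end

section
/- (Corollary to Roos bound) If N is a consecutive subset of Ω, M ⊆ Ω is nonempty, and there is a consecutive set M' ⊇ M with |M'| < |M| + |N|, then every λ-constacyclic code whose defining set contains MN = (1/α)⋃_{ε∈M} εN has minimum distance at least |M| + |N|. -/
open Polynomial

/-- A consecutive subset of `Ω = {αξ^k}`: a set of the form
`{αξ^{e+zn} : 0 ≤ z ≤ δ-2}` with `δ ≥ 2`, `n > 0` and `gcd(m,n) = 1`. -/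
def IsConsecutive {F : Type*} [Field F] [DecidableEq F]
    (m : ℕ) (α ξ : F) (E : Finset F) : Prop :=
  ∃ e n δ : ℕ, 0 < n ∧ 2 ≤ δ ∧ Nat.gcd m n = 1 ∧
    E = (Finset.range (δ - 1)).image (fun z => α * ξ ^ (e + z * n))

section RBaux

open Polynomial Module LinearMap

variable {F : Type*} [Field F]

private lemma rb_sylvester {V W U : Type*} [AddCommGroup V] [Module F V]
    [AddCommGroup W] [Module F W] [AddCommGroup U] [Module F U]
    [FiniteDimensional F V] [FiniteDimensional F W]
    (f : V →ₗ[F] W) (g : W →ₗ[F] U) :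
    finrank F (range f) ≤ finrank F (range (g ∘ₗ f)) + finrank F (ker g) := by
  have hrn := LinearMap.finrank_range_add_finrank_ker (g.domRestrict (range f))
  rw [LinearMap.range_domRestrict] at hrn
  have heq : range (g ∘ₗ f) = Submodule.map g (range f) := LinearMap.range_comp f g
  have hker : finrank F (ker (g.domRestrict (range f))) ≤ finrank F (ker g) := by
    refine LinearMap.finrank_le_finrank_of_injective
      (f := LinearMap.codRestrict (ker g)
        ((range f).subtype ∘ₗ (ker (g.domRestrict (range f))).subtype) (fun x => by
          have hx := x.2
          simp only [LinearMap.mem_ker, LinearMap.domRestrict_apply] at hx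
          simpa [LinearMap.mem_ker] using hx)) ?_
    rw [← LinearMap.ker_eq_bot, LinearMap.ker_codRestrict]
    rw [LinearMap.ker_eq_bot]
    exact (Submodule.injective_subtype _).comp (Submodule.injective_subtype _)
  rw [heq]
  omega

private lemma rb_inj {p q : ℕ} (h : q ≤ p) (A : Matrix (Fin p) (Fin q) F)
    (hA : (A.submatrix (Fin.castLE h) _root_.id).det ≠ 0) {v : Fin q → F}
    (hv : A.mulVec v = 0) : v = 0 := by
  refine Matrix.eq_zero_of_mulVec_eq_zero hA ?_
  ext z
  have h1 : (A.submatrix (Fin.castLE h) _root_.id).mulVec v z = A.mulVec v (Fin.castLE h z) := by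
    simp [Matrix.mulVec, Matrix.submatrix_apply, dotProduct]
  rw [h1, hv]
  rfl

private lemma rb_surj {p q : ℕ} (h : p ≤ q) (A : Matrix (Fin p) (Fin q) F)
    (hA : (A.submatrix _root_.id (Fin.castLE h)).det ≠ 0) :
    Function.Surjective A.mulVecLin := by
  intro y
  set Q := A.submatrix _root_.id (Fin.castLE h) with hQ
  have : Invertible Q := Q.invertibleOfIsUnitDet (isUnit_iff_ne_zero.mpr hA)
  set Jm : Matrix (Fin q) (Fin p) F := Matrix.of fun j z => if Fin.castLE h z = j then 1 else 0
    with hJm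
  have hAJ : A * Jm = Q := by
    ext z' z
    rw [Matrix.mul_apply]
    simp only [hJm, Matrix.of_apply, mul_ite, mul_one, mul_zero]
    rw [Finset.sum_ite_eq Finset.univ (Fin.castLE h z) (fun j => A z' j)]
    simp [hQ, Matrix.submatrix_apply]
  refine ⟨Jm.mulVec (Q⁻¹.mulVec y), ?_⟩
  rw [Matrix.mulVecLin_apply, Matrix.mulVec_mulVec, hAJ, Matrix.mulVec_mulVec,
    Matrix.mul_inv_of_invertible, Matrix.one_mulVec]

private lemma rb_consec [DecidableEq F] {m : ℕ} (hm : 0 < m) {ξ α : F}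
    (hξ : IsPrimitiveRoot ξ m) (hα : α ≠ 0) (e n δ : ℕ) (hn : Nat.gcd m n = 1)
    {E : Finset F}
    (hE : E = (Finset.range (δ - 1)).image (fun z => α * ξ ^ (e + z * n))) :
    E = (Finset.range E.card).image (fun z => α * ξ ^ (e + z * n)) ∧
    (∀ z1 < E.card, ∀ z2 < E.card, α * ξ ^ (e + z1 * n) = α * ξ ^ (e + z2 * n) → z1 = z2) ∧
    E.card ≤ m := by
  have hη : IsPrimitiveRoot (ξ ^ n) m := hξ.pow_of_coprime n (Nat.Coprime.symm hn)
  have hξ0 : ξ ≠ 0 := hξ.ne_zero hm.ne'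
  set f : ℕ → F := fun z => α * ξ ^ (e + z * n) with hf
  have hperiod : ∀ z, f z = f (z % m) := by
    intro z
    have hz : ξ ^ (z * n) = ξ ^ (z % m * n) := by
      conv_lhs => rw [← Nat.mod_add_div z m]
      rw [add_mul, pow_add, mul_assoc m, pow_mul ξ m, hξ.pow_eq_one, one_pow, mul_one]
    simp only [hf, pow_add, hz]
  have hinj : ∀ z1 < m, ∀ z2 < m, f z1 = f z2 → z1 = z2 := by
    intro z1 h1 z2 h2 hz
    simp only [hf, pow_add, ← mul_assoc] at hz
    have hz2 := mul_left_cancel₀ (mul_ne_zero hα (pow_ne_zero e hξ0)) hz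
    rw [mul_comm z1 n, mul_comm z2 n, pow_mul, pow_mul] at hz2
    exact hη.pow_inj h1 h2 hz2
  set t := min (δ - 1) m with htdef
  have himg : E = (Finset.range t).image f := by
    rw [hE]
    apply Finset.Subset.antisymm
    · intro x hx
      simp only [Finset.mem_image, Finset.mem_range] at hx ⊢
      obtain ⟨z, hz, rfl⟩ := hx
      by_cases hc : δ - 1 ≤ m
      · exact ⟨z, by omega, rfl⟩
      · have hzm : z % m < m := Nat.mod_lt _ hm
        exact ⟨z % m, by omega, (hperiod z).symm⟩
    · intro x hx
      simp only [Finset.mem_image, Finset.mem_range] at hx ⊢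
      obtain ⟨z, hz, rfl⟩ := hx
      exact ⟨z, by omega, rfl⟩
  have hcard : E.card = t := by
    rw [himg, Finset.card_image_of_injOn, Finset.card_range]
    intro z1 h1 z2 h2 hz
    simp only [Finset.coe_range, Set.mem_Iio] at h1 h2
    exact hinj z1 (lt_of_lt_of_le h1 (min_le_right _ _)) z2
      (lt_of_lt_of_le h2 (min_le_right _ _)) hz
  rw [hcard]
  exact ⟨himg, fun z1 h1 z2 h2 hz => hinj z1 (lt_of_lt_of_le h1 (min_le_right _ _)) z2
      (lt_of_lt_of_le h2 (min_le_right _ _)) hz, min_le_right _ _⟩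

end RBaux

/-- (Corollary to the Roos bound.) If `N` is a consecutive subset of `Ω`, `M ⊆ Ω` is
nonempty, and there is a consecutive set `M' ⊇ M` with `|M'| < |M| + |N|`, then every
λ-constacyclic code whose defining set contains `MN = (1/α)⋃_{ε∈M} εN` has minimum
distance at least `|M| + |N|`. -/
theorem roos_corollary_constacyclic
    (K : Type*) [Field K] [Fintype K] (m : ℕ) (hm : 0 < m)
    (hgcd : Nat.gcd m (Fintype.card K) = 1) (lam : K) (hlam : lam ≠ 0)
    (F : Type*) [Field F] [DecidableEq F] [Algebra K F]
    (α ξ : F) (hα : α ^ m = algebraMap K F lam) (hξ : IsPrimitiveRoot ξ m)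
    (Omega : Finset F) (hOmega : Omega = (Finset.range m).image (fun k => α * ξ ^ k))
    (N M : Finset F) (hNsub : N ⊆ Omega) (hMsub : M ⊆ Omega)
    (hNne : N.Nonempty) (hMne : M.Nonempty)
    (hNcons : IsConsecutive m α ξ N)
    (M' : Finset F) (hM' : IsConsecutive m α ξ M') (hMM' : M ⊆ M')
    (hcard : M'.card < M.card + N.card)
    (MN : Finset F) (hMN : MN = M.biUnion (fun ε => N.image (fun x => α⁻¹ * (ε * x))))
    (g : Polynomial K) (hg : g ∣ (X : Polynomial K) ^ m - C lam)
    (hdef : ∀ x ∈ MN, Polynomial.aeval x g = 0)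
    (c : Polynomial K) (hc : c ≠ 0) (hcdeg : c.degree < m) (hcg : g ∣ c) :
    M.card + N.card ≤ c.support.card := by
  classical
  -- Basic nonzero facts
  have hKF : Function.Injective (algebraMap K F) := (algebraMap K F).injective
  have hlamF : algebraMap K F lam ≠ 0 := fun h => hlam (hKF (by rw [h, map_zero]))
  have hα0 : α ≠ 0 := fun h => hlamF (by rw [← hα, h, zero_pow hm.ne'])
  have hξ0 : ξ ≠ 0 := hξ.ne_zero hm.ne'
  -- Unpack the consecutive sets
  obtain ⟨b, n, δN, hn0, hδN, hgn, hNeq⟩ := hNcons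
  obtain ⟨hNimg, hNinj, hNm⟩ := rb_consec hm hξ hα0 b n δN hgn hNeq
  obtain ⟨e', n', δM, hn'0, hδM, hgn', hMeq⟩ := hM'
  obtain ⟨hMimg, hMinj, hMm⟩ := rb_consec hm hξ hα0 e' n' δM hgn' hMeq
  set t := N.card with htd
  set s := M'.card with hsd
  set r := M.card with hrd
  set w := c.support.card with hwd
  have hr1 : 1 ≤ r := Finset.card_pos.mpr hMne
  have hw1 : 1 ≤ w := Finset.card_pos.mpr (Polynomial.nonempty_support_iff.mpr hc)
  have ht1 : 1 ≤ t := Finset.card_pos.mpr hNne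
  -- support enumeration
  set σ : Fin w → ℕ := fun j => ((c.support.equivFin.symm j : c.support) : ℕ) with hσd
  have hσmem : ∀ j, σ j ∈ c.support := fun j => (c.support.equivFin.symm j).2
  have hσinj : Function.Injective σ := fun a b h =>
    c.support.equivFin.symm.injective (Subtype.ext h)
  have hσm : ∀ j, σ j < m := by
    intro j
    exact lt_of_le_of_lt (Polynomial.le_natDegree_of_mem_supp _ (hσmem j))
      ((Polynomial.natDegree_lt_iff_degree_lt hc).mpr hcdeg)
  set cc : Fin w → F := fun j => algebraMap K F (c.coeff (σ j)) with hccd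
  have hcc0 : ∀ j, cc j ≠ 0 := fun j h =>
    Polynomial.mem_support_iff.mp (hσmem j) (hKF (by rw [map_zero]; exact h))
  have haeval : ∀ x : F, aeval x c = ∑ j : Fin w, cc j * x ^ (σ j) := by
    intro x
    rw [aeval_def, eval₂_eq_sum, Polynomial.sum_def, ← Finset.sum_coe_sort]
    exact Fintype.sum_equiv c.support.equivFin
      (fun i => algebraMap K F (c.coeff i) * x ^ (i : ℕ))
      (fun j => cc j * x ^ (σ j))
      (fun i => by simp [hccd, hσd, Equiv.symm_apply_apply])
  -- nodes
  set β : Fin w → F := fun j => (ξ ^ n) ^ (σ j) with hβd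
  set γ : Fin w → F := fun j => (ξ ^ n') ^ (σ j) with hγd
  have hη : IsPrimitiveRoot (ξ ^ n) m := hξ.pow_of_coprime n (Nat.Coprime.symm hgn)
  have hη' : IsPrimitiveRoot (ξ ^ n') m := hξ.pow_of_coprime n' (Nat.Coprime.symm hgn')
  have hβinj : Function.Injective β := fun a b h =>
    hσinj (hη.pow_inj (hσm a) (hσm b) h)
  have hγinj : Function.Injective γ := fun a b h =>
    hσinj (hη'.pow_inj (hσm a) (hσm b) h)
  -- enumeration of M' and positions of M
  set εf : Fin s → F := fun k => α * ξ ^ (e' + (k : ℕ) * n') with hεd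
  have hεf0 : ∀ k : Fin s, εf k ≠ 0 := fun k =>
    mul_ne_zero hα0 (pow_ne_zero _ hξ0)
  have hεM' : ∀ k : Fin s, εf k ∈ M' := fun k => by
    rw [hMimg]
    exact Finset.mem_image.mpr ⟨(k : ℕ), Finset.mem_range.mpr k.isLt, rfl⟩
  set TT : Finset (Fin s) := Finset.univ.filter (fun k => εf k ∈ M) with hTTd
  have hTTcard : TT.card = r := by
    refine Finset.card_bij (fun k _ => εf k) (fun k hk => (Finset.mem_filter.mp hk).2)
      (fun k1 hk1 k2 hk2 heq => Fin.ext (hMinj _ k1.isLt _ k2.isLt heq)) (fun x hx => ?_)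
    have hx' : x ∈ M' := hMM' hx
    rw [hMimg] at hx'
    obtain ⟨z, hz, rfl⟩ := Finset.mem_image.mp hx'
    rw [Finset.mem_range] at hz
    exact ⟨⟨z, hz⟩, Finset.mem_filter.mpr ⟨Finset.mem_univ _, hx⟩, rfl⟩
  -- matrices
  set Lmat : Matrix (Fin t) (Fin w) F := Matrix.of fun z j => β j ^ (z : ℕ) with hLd
  set U : Matrix (Fin w) (Fin s) F :=
    Matrix.of fun j k => cc j * (εf k * ξ ^ b) ^ (σ j) with hUd
  set d : Fin w → F := fun j => cc j * (α * ξ ^ (e' + b)) ^ (σ j) with hdd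
  have hd0 : ∀ j, d j ≠ 0 := fun j =>
    mul_ne_zero (hcc0 j) (pow_ne_zero _ (mul_ne_zero hα0 (pow_ne_zero _ hξ0)))
  have hU : ∀ j k, U j k = d j * γ j ^ (k : ℕ) := by
    intro j k
    have h1 : εf k * ξ ^ b = (α * ξ ^ (e' + b)) * (ξ ^ n') ^ (k : ℕ) := by
      simp only [hεd, mul_assoc, ← pow_mul, ← pow_add]
      congr 2
      ring
    have h2 : ((ξ ^ n') ^ (k : ℕ)) ^ (σ j) = ((ξ ^ n') ^ (σ j)) ^ (k : ℕ) :=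
      pow_right_comm _ _ _
    simp only [hUd, Matrix.of_apply, h1, mul_pow, hdd, hγd, h2]
    ring
  have hLU : ∀ (z : Fin t) (k : Fin s),
      (Lmat * U) z k = aeval (εf k * ξ ^ (b + (z : ℕ) * n)) c := by
    intro z k
    rw [Matrix.mul_apply, haeval]
    refine Finset.sum_congr rfl (fun j _ => ?_)
    have h3 : εf k * ξ ^ (b + (z : ℕ) * n) = (εf k * ξ ^ b) * (ξ ^ n) ^ (z : ℕ) := by
      rw [pow_add, mul_comm (z : ℕ) n, pow_mul, ← mul_assoc]
    simp only [hLd, hUd, Matrix.of_apply, hβd, h3, mul_pow, pow_right_comm]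
    ring
  have hvanish : ∀ k ∈ TT, ∀ z : Fin t, aeval (εf k * ξ ^ (b + (z : ℕ) * n)) c = 0 := by
    intro k hk z
    have hkM : εf k ∈ M := (Finset.mem_filter.mp hk).2
    have hyN : α * ξ ^ (b + (z : ℕ) * n) ∈ N := by
      rw [hNimg]
      exact Finset.mem_image.mpr ⟨(z : ℕ), Finset.mem_range.mpr z.isLt, rfl⟩
    have hxMN : εf k * ξ ^ (b + (z : ℕ) * n) ∈ MN := by
      rw [hMN]
      refine Finset.mem_biUnion.mpr ⟨εf k, hkM, Finset.mem_image.mpr ⟨_, hyN, ?_⟩⟩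
      field_simp
    obtain ⟨h', hch⟩ := hcg
    rw [hch, map_mul, hdef _ hxMN, zero_mul]
  have hLUz : ∀ k ∈ TT, ∀ z : Fin t, (Lmat * U) z k = 0 := fun k hk z => by
    rw [hLU]; exact hvanish k hk z
  -- Step A : t ≤ w
  have htw : t ≤ w := by
    by_contra hcon
    push_neg at hcon
    have hwt : w ≤ t := le_of_lt hcon
    obtain ⟨k0, hk0⟩ : TT.Nonempty := Finset.card_pos.mp (by rw [hTTcard]; exact hr1)
    have hQdet : (Lmat.submatrix (Fin.castLE hwt) _root_.id).det ≠ 0 := by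
      have heq : Lmat.submatrix (Fin.castLE hwt) _root_.id = (Matrix.vandermonde β).transpose := by
        ext z j
        simp [hLd, Matrix.vandermonde_apply, Matrix.submatrix_apply, Matrix.transpose_apply]
      rw [heq, Matrix.det_transpose]
      exact Matrix.det_vandermonde_ne_zero_iff.mpr hβinj
    have hLv : Lmat.mulVec (fun j => U j k0) = 0 := by
      funext z
      have heq2 : Lmat.mulVec (fun j => U j k0) z = (Lmat * U) z k0 := by
        rw [Matrix.mul_apply]; rfl
      rw [heq2, hLUz k0 hk0 z]; rfl
    have hU0 := congrFun (rb_inj hwt Lmat hQdet hLv) ⟨0, hw1⟩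
    simp only [hUd, Matrix.of_apply, Pi.zero_apply] at hU0
    exact (mul_ne_zero (hcc0 _)
      (pow_ne_zero _ (mul_ne_zero (hεf0 k0) (pow_ne_zero _ hξ0)))) hU0
  -- linear maps and ranks
  set L := Lmat.mulVecLin with hLmd
  set Phi := U.mulVecLin with hPhid
  set Cm := (Lmat * U).mulVecLin with hCmd
  have hCm : Cm = L ∘ₗ Phi := Matrix.mulVecLin_mul _ _
  have hfinW : Module.finrank F (Fin w → F) = w := by
    simp [Module.finrank_pi]
  have hfinS : Module.finrank F (Fin s → F) = s := by
    simp [Module.finrank_pi]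
  have hfinT : Module.finrank F (Fin t → F) = t := by
    simp [Module.finrank_pi]
  have hLsurj : Function.Surjective L := by
    refine rb_surj htw Lmat ?_
    have heq : Lmat.submatrix _root_.id (Fin.castLE htw) =
        (Matrix.vandermonde (β ∘ Fin.castLE htw)).transpose := by
      ext z j
      simp [hLd, Matrix.vandermonde_apply, Matrix.submatrix_apply, Matrix.transpose_apply]
    rw [heq, Matrix.det_transpose]
    exact Matrix.det_vandermonde_ne_zero_iff.mpr (hβinj.comp (Fin.castLE_injective htw))
  have hRNL : t + Module.finrank F (LinearMap.ker L) = w := by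
    have hh := LinearMap.finrank_range_add_finrank_ker L
    rw [LinearMap.range_eq_top.mpr hLsurj, finrank_top, hfinT, hfinW] at hh
    exact hh
  -- kernel of Cm contains the M-supported vectors
  have hkC : r ≤ Module.finrank F (LinearMap.ker Cm) := by
    let J : (↥TT → F) →ₗ[F] (Fin s → F) :=
      { toFun := fun a k => if h : k ∈ TT then a ⟨k, h⟩ else 0
        map_add' := by
          intro a b; funext k; by_cases h : k ∈ TT <;> simp [h]
        map_smul' := by
          intro cs a; funext k; by_cases h : k ∈ TT <;> simp [h] }
    have hJinj : Function.Injective J := by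
      intro a b hab
      funext x
      have hx := congrFun hab (x : Fin s)
      simpa [J, x.2] using hx
    have hJker : ∀ a, Cm (J a) = 0 := by
      intro a
      funext z
      show (Lmat * U).mulVec (J a) z = 0
      rw [Matrix.mulVec, dotProduct]
      refine Finset.sum_eq_zero (fun k _ => ?_)
      by_cases hk : k ∈ TT
      · rw [hLUz k hk z, zero_mul]
      · have hz : (J a) k = 0 := dif_neg hk
        rw [hz, mul_zero]
    have hfin := LinearMap.finrank_le_finrank_of_injective
      (f := J.codRestrict (LinearMap.ker Cm) (fun a => LinearMap.mem_ker.mpr (hJker a)))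
      (by
        rw [← LinearMap.ker_eq_bot, LinearMap.ker_codRestrict, LinearMap.ker_eq_bot]
        exact hJinj)
    rwa [Module.finrank_pi, Fintype.card_coe, hTTcard] at hfin
  have hRNP := LinearMap.finrank_range_add_finrank_ker Phi
  have hRNC := LinearMap.finrank_range_add_finrank_ker Cm
  have hsylv := rb_sylvester Phi L
  rw [← hCm] at hsylv
  rw [hfinS] at hRNP hRNC
  rcases le_total s w with hsw | hws
  · -- injective case
    have hUdet : (U.submatrix (Fin.castLE hsw) _root_.id).det ≠ 0 := by
      have heq : U.submatrix (Fin.castLE hsw) _root_.id =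
          Matrix.diagonal (fun k : Fin s => d (Fin.castLE hsw k)) *
            Matrix.vandermonde (fun k : Fin s => γ (Fin.castLE hsw k)) := by
        ext j k
        rw [Matrix.submatrix_apply, Matrix.diagonal_mul, Matrix.vandermonde_apply, hU]
        rfl
      rw [heq, Matrix.det_mul, Matrix.det_diagonal]
      exact mul_ne_zero (Finset.prod_ne_zero_iff.mpr (fun k _ => hd0 _))
        (Matrix.det_vandermonde_ne_zero_iff.mpr (hγinj.comp (Fin.castLE_injective hsw)))
    have hPker : LinearMap.ker Phi = ⊥ := by
      rw [LinearMap.ker_eq_bot']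
      intro v hv
      exact rb_inj hsw U hUdet (by rw [← Matrix.mulVecLin_apply]; exact hv)
    rw [hPker, finrank_bot] at hRNP
    omega
  · -- surjective case
    have hUdet : (U.submatrix _root_.id (Fin.castLE hws)).det ≠ 0 := by
      have heq : U.submatrix _root_.id (Fin.castLE hws) =
          Matrix.diagonal d * Matrix.vandermonde γ := by
        ext j k
        rw [Matrix.submatrix_apply, Matrix.diagonal_mul, Matrix.vandermonde_apply, hU]
        rfl
      rw [heq, Matrix.det_mul, Matrix.det_diagonal]
      exact mul_ne_zero (Finset.prod_ne_zero_iff.mpr (fun k _ => hd0 _))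
        (Matrix.det_vandermonde_ne_zero_iff.mpr hγinj)
    have hPsurj : Function.Surjective Phi := rb_surj hws U hUdet
    have hrp : Module.finrank F (LinearMap.range Phi) = w := by
      rw [LinearMap.range_eq_top.mpr hPsurj, finrank_top, hfinW]
    rw [hrp] at hRNP hsylv
    omega
end

section
/- (Shift bound) Let K be a field, f ∈ K[x] a nonzero polynomial, and S = {θ ∈ K : f(θ) = 0}. Then for every finite subset A of K that is independent with respect to S, the number of nonzero coefficients of f is at least |A|. -/
open Polynomial

/-- Finite subsets of a field `K` that are independent with respect to `S ⊆ K`: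
∅ is independent; if `A ⊆ S` is independent and `b ∉ S` then `A ∪ {b}` is independent;
if `A` is independent and `c ≠ 0` then `cA` is independent. -/
inductive IndepFrom {K : Type*} [Field K] [DecidableEq K] (S : Set K) : Finset K → Prop
  | empty : IndepFrom S ∅
  | insert {A : Finset K} {b : K} (hA : IndepFrom S A) (hAS : ↑A ⊆ S) (hb : b ∉ S) :
      IndepFrom S (insert b A)
  | smul {A : Finset K} {c : K} (hA : IndepFrom S A) (hc : c ≠ 0) :
      IndepFrom S (A.image (fun a => c * a))

lemma shift_bound_key {K : Type*} [Field K] [DecidableEq K]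
    (f : Polynomial K) (A : Finset K)
    (hA : IndepFrom {θ : K | Polynomial.eval θ f = 0} A) :
    ∀ g : K → K, (∀ i ∈ f.support, ∑ a ∈ A, g a * a ^ i = 0) → ∀ a ∈ A, g a = 0 := by
  induction hA with
  | empty => intro g _ a ha; simp at ha
  | @insert A b hA' hAS hb ih =>
      intro g hg
      have hbA : b ∉ A := fun h => hb (hAS h)
      have hg' : ∀ i ∈ f.support, g b * b ^ i + ∑ a ∈ A, g a * a ^ i = 0 := by
        intro i hi
        have := hg i hi
        rwa [Finset.sum_insert hbA] at this
      have heval : ∀ a : K, eval a f = ∑ i ∈ f.support, f.coeff i * a ^ i := by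
        intro a; rw [Polynomial.eval_eq_sum]; rfl
      have hzero : ∀ a ∈ A, eval a f = 0 := fun a ha => hAS ha
      have hbne : eval b f ≠ 0 := hb
      -- pair with coefficients
      have hpair : g b * eval b f = 0 := by
        have h0 : ∑ i ∈ f.support, f.coeff i * (g b * b ^ i + ∑ a ∈ A, g a * a ^ i) = 0 := by
          apply Finset.sum_eq_zero
          intro i hi
          rw [hg' i hi, mul_zero]
        have h1 : ∑ i ∈ f.support, f.coeff i * (g b * b ^ i + ∑ a ∈ A, g a * a ^ i)
            = g b * eval b f + ∑ a ∈ A, g a * eval a f := by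
          rw [heval b]
          simp only [mul_add, Finset.sum_add_distrib, Finset.mul_sum]
          congr 1
          · apply Finset.sum_congr rfl; intro i _; ring
          · rw [Finset.sum_comm]
            apply Finset.sum_congr rfl; intro a _
            rw [heval a, Finset.mul_sum]
            apply Finset.sum_congr rfl; intro i _; ring
        rw [h1] at h0
        have h2 : ∑ a ∈ A, g a * eval a f = 0 :=
          Finset.sum_eq_zero fun a ha => by rw [hzero a ha, mul_zero]
        rw [h2, add_zero] at h0; exact h0
      have hgb : g b = 0 := by
        rcases mul_eq_zero.mp hpair with h | h
        · exact h
        · exact absurd h hbne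
      intro a ha
      rcases Finset.mem_insert.mp ha with rfl | ha'
      · exact hgb
      · apply ih g _ a ha'
        intro i hi
        have := hg' i hi
        rw [hgb, zero_mul, zero_add] at this
        exact this
  | @smul A c hA' hc ih =>
      intro g hg
      have hinj : Set.InjOn (fun a => c * a) A := fun x _ y _ h =>
        mul_left_cancel₀ hc h
      have key : ∀ a ∈ A, g (c * a) = 0 := by
        apply ih (fun a => g (c * a))
        intro i hi
        have := hg i hi
        rw [Finset.sum_image (fun x hx y hy h => hinj hx hy h)] at this
        have hc' : (c : K) ^ i ≠ 0 := pow_ne_zero _ hc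
        have : c ^ i * ∑ a ∈ A, g (c * a) * a ^ i = 0 := by
          rw [Finset.mul_sum]
          rw [← this]
          apply Finset.sum_congr rfl; intro a _; rw [mul_pow]; ring
        exact (mul_eq_zero.mp this).resolve_left hc'
      intro x hx
      rcases Finset.mem_image.mp hx with ⟨a, ha, rfl⟩
      exact key a ha

/-- (Shift bound.) If `f ∈ K[x]` is a nonzero polynomial with root set `S`, then
`wt(f) ≥ |A|` for every finite subset `A` of `K` independent with respect to `S`. -/
theorem shift_bound {K : Type*} [Field K] [DecidableEq K]
    (f : Polynomial K) (hf : f ≠ 0)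
    (A : Finset K) (hA : IndepFrom {θ : K | Polynomial.eval θ f = 0} A) :
    A.card ≤ f.support.card := by
  classical
  set v : K → (f.support → K) := fun a i => a ^ (i : ℕ) with hv
  have hli : LinearIndependent K (fun a : A => v a) := by
    rw [Fintype.linearIndependent_iff]
    intro g hsum a
    set g' : K → K := fun x => if h : x ∈ A then g ⟨x, h⟩ else 0 with hg'
    have hcoord : ∀ i ∈ f.support, ∑ x ∈ A, g' x * x ^ i = 0 := by
      intro i hi
      have h0 := congrFun hsum ⟨i, hi⟩
      rw [Finset.sum_apply] at h0
      simp only [Pi.zero_apply, Pi.smul_apply, smul_eq_mul] at h0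
      rw [← Finset.sum_attach A (fun x => g' x * x ^ i)]
      rw [Finset.univ_eq_attach] at h0
      rw [← h0]
      apply Finset.sum_congr rfl
      intro x _
      simp [hg', x.2, hv]
    have := shift_bound_key f A hA g' hcoord a a.2
    simpa [hg', a.2] using this
  have hcard := hli.fintype_card_le_finrank
  simpa [Module.finrank_pi] using hcard
end

section
/- Let C be a λ-quasi-twisted code of index ℓ and length mℓ over F_q with reduced upper-triangular generator matrix G̃(x) having diagonal entries g_{0,0}(x),...,g_{ℓ-1,ℓ-1}(x). Then the F_q-dimension of C equals mℓ - Σ_{j=0}^{ℓ-1} deg g_{j,j}(x). -/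
open Polynomial

/-- (Dimension of a QT code.) Let `C` be the λ-quasi-twisted code of index `ℓ` obtained
as the image in `R^ℓ = (K[x]/(x^m-λ))^ℓ` of the `K[x]`-submodule `M ⊆ K[x]^ℓ` generated
by the rows of the reduced upper-triangular matrix `G̃(x)` with diagonal entries
`g_{j,j}(x)`. Then `dim_K C = mℓ - Σ_j deg g_{j,j}(x)`. -/
theorem qt_code_dimension
    (K : Type*) [Field K] [Fintype K] (m ℓ : ℕ) (hm : 0 < m) (hℓ : 0 < ℓ)
    (hgcd : Nat.gcd m (Fintype.card K) = 1) (lam : K) (hlam : lam ≠ 0)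
    (I : Ideal (Polynomial K)) (hI : I = Ideal.span {(X : Polynomial K) ^ m - C lam})
    (G : Matrix (Fin ℓ) (Fin ℓ) (Polynomial K))
    (hupper : ∀ i j : Fin ℓ, j < i → G i j = 0)
    (hdiv : ∀ j : Fin ℓ, G j j ∣ (X : Polynomial K) ^ m - C lam)
    (hdeg : ∀ i j : Fin ℓ, i < j → (G i j).degree < (G j j).degree)
    (hfull : ∀ i j : Fin ℓ, i ≠ j → G j j = (X : Polynomial K) ^ m - C lam → G i j = 0)
    (M : Submodule (Polynomial K) (Fin ℓ → Polynomial K))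
    (hM : M = Submodule.span (Polynomial K) (Set.range (fun i : Fin ℓ => G i)))
    (hMe : ∀ j : Fin ℓ,
      (((X : Polynomial K) ^ m - C lam) • (Pi.single j 1 : Fin ℓ → Polynomial K)) ∈ M)
    (Φ : (Fin ℓ → Polynomial K) →ₗ[K] (Fin ℓ → Polynomial K ⧸ I))
    (hΦ : Φ = LinearMap.pi (fun j : Fin ℓ =>
      (Ideal.Quotient.mkₐ K I).toLinearMap.comp
        (LinearMap.proj j : (Fin ℓ → Polynomial K) →ₗ[K] Polynomial K)))
    (Code : Submodule K (Fin ℓ → Polynomial K ⧸ I))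
    (hCode : Code = Submodule.map Φ (M.restrictScalars K)) :
    Module.finrank K Code = m * ℓ - ∑ j : Fin ℓ, (G j j).natDegree := by
  classical
  set f : Polynomial K := (X : Polynomial K) ^ m - C lam with hf
  have hf0 : f ≠ 0 := X_pow_sub_C_ne_zero hm lam
  have hfdeg : f.degree = (m : WithBot ℕ) := degree_X_pow_sub_C hm lam
  have hfnat : f.natDegree = m := natDegree_X_pow_sub_C
  have hg0 : ∀ j, G j j ≠ 0 := by
    intro j hz
    exact hf0 (zero_dvd_iff.mp (hz ▸ hdiv j))
  set d : Fin ℓ → ℕ := fun j => (G j j).natDegree with hd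
  have hgdeg : ∀ j, (G j j).degree = (d j : WithBot ℕ) := fun j => degree_eq_natDegree (hg0 j)
  have hdle : ∀ j, d j ≤ m := by
    intro j
    have h1 : (G j j).degree ≤ f.degree := degree_le_of_dvd (hdiv j) hf0
    rw [hfdeg] at h1
    exact natDegree_le_iff_degree_le.mpr h1
  have hrow : ∀ j : Fin ℓ, G j ∈ M := by
    intro j; rw [hM]; exact Submodule.subset_span ⟨j, rfl⟩
  -- Φ component computation
  have hPhi_apply : ∀ (v : Fin ℓ → Polynomial K) (j : Fin ℓ),
      Φ v j = Ideal.Quotient.mk I (v j) := by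
    intro v j; rw [hΦ]; rfl
  have hPhi0 : ∀ v : Fin ℓ → Polynomial K, (∀ k, f ∣ v k) → Φ v = 0 := by
    intro v hv
    funext j
    rw [hPhi_apply]
    show Ideal.Quotient.mk I (v j) = 0
    rw [Ideal.Quotient.eq_zero_iff_mem, hI]
    exact Ideal.mem_span_singleton.mpr (hv j)
  have hPhiDvd : ∀ v : Fin ℓ → Polynomial K, Φ v = 0 → ∀ k, f ∣ v k := by
    intro v hv k
    have h1 : Φ v k = 0 := congrFun hv k
    rw [hPhi_apply] at h1
    have h2 : v k ∈ I := Ideal.Quotient.eq_zero_iff_mem.mp h1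
    rw [hI] at h2
    exact Ideal.mem_span_singleton.mp h2
  have hCsmul : ∀ (a : K) (w : Fin ℓ → Polynomial K), (C a) • w = a • w := by
    intro a w
    have := algebraMap_smul (Polynomial K) a w
    rwa [Polynomial.algebraMap_eq] at this
  -- Lemma A: an element of M vanishing in coordinates ≤ j is a combination of rows > j
  have lemA : ∀ (j : Fin ℓ) (v : Fin ℓ → Polynomial K), v ∈ M → (∀ k, k ≤ j → v k = 0) →
      ∃ c : Fin ℓ → Polynomial K, (∀ k, k ≤ j → c k = 0) ∧ v = ∑ k, c k • G k := by
    intro j v hvM hv0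
    rw [hM] at hvM
    obtain ⟨c, hc⟩ := (Submodule.mem_span_range_iff_exists_fun (Polynomial K)).mp hvM
    have hcomp : ∀ k : Fin ℓ, v k = ∑ i, c i * G i k := by
      intro k
      rw [← hc]
      simp [Finset.sum_apply, smul_eq_mul]
    have key : ∀ N : ℕ, ∀ k : Fin ℓ, (k : ℕ) < N → k ≤ j → c k = 0 := by
      intro N
      induction N with
      | zero => intro k hk; omega
      | succ N ih =>
        intro k hk hkj
        have hsum : v k = c k * G k k := by
          rw [hcomp k]
          apply Finset.sum_eq_single
          · intro i _ hik
            rcases lt_or_gt_of_ne hik with hlt | hgt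
            · have hiN : (i : ℕ) < N := by
                have := Fin.lt_def.mp hlt; omega
              rw [ih i hiN (le_trans hlt.le hkj), zero_mul]
            · rw [hupper i k hgt, mul_zero]
          · intro h; exact absurd (Finset.mem_univ k) h
        have h0 : c k * G k k = 0 := by rw [← hsum]; exact hv0 k hkj
        exact (mul_eq_zero.mp h0).resolve_right (hg0 k)
    exact ⟨c, fun k hk => key ℓ k k.isLt hk, hc.symm⟩
  -- the candidate basis
  set b : (Σ j : Fin ℓ, Fin (m - d j)) → (Fin ℓ → Polynomial K ⧸ I) :=
    fun p => Φ ((X : Polynomial K) ^ (p.2 : ℕ) • G p.1) with hb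
  set S : Submodule K (Fin ℓ → Polynomial K ⧸ I) := Submodule.span K (Set.range b) with hS
  -- spanning: downward induction
  have claim1 : ∀ (N : ℕ) (j : Fin ℓ), ℓ - (j : ℕ) ≤ N → ∀ p : Polynomial K,
      Φ (p • G j) ∈ S := by
    intro N
    induction N with
    | zero => intro j hj; have := j.isLt; omega
    | succ N ih =>
      intro j hj p
      obtain ⟨h, hh⟩ := hdiv j
      have hh0 : h ≠ 0 := by
        rintro rfl; rw [mul_zero] at hh; exact hf0 hh
      have hhnat : h.natDegree = m - d j := by
        have h1 : f.natDegree = (G j j).natDegree + h.natDegree := by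
          rw [hh]; exact natDegree_mul (hg0 j) hh0
        rw [hfnat] at h1
        have := hdle j
        have hdj : (G j j).natDegree = d j := rfl
        omega
      have hmon : (h * C h.leadingCoeff⁻¹).Monic := monic_mul_leadingCoeff_inv hh0
      set h' : Polynomial K := h * C h.leadingCoeff⁻¹ with hh'
      have hdegh' : h'.degree = h.degree := degree_mul_leadingCoeff_inv h hh0
      set r := p %ₘ h' with hr
      set q := p /ₘ h' with hq
      have hpsplit : p = r + h' * q := (modByMonic_add_div p h').symm
      have hrdeg : r.degree < h.degree := hdegh' ▸ degree_modByMonic_lt p hmon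
      have part1 : Φ (r • G j) ∈ S := by
        by_cases hr0 : r = 0
        · rw [hr0]; simp
        · have hrn : r.natDegree < m - d j := by
            have h2 : r.natDegree < h.natDegree := natDegree_lt_natDegree hr0 hrdeg
            omega
          have hrsum : r = ∑ t ∈ Finset.range (m - d j), C (r.coeff t) * X ^ t := by
            conv_lhs => rw [as_sum_range' r _ hrn]
            exact Finset.sum_congr rfl fun t _ => (C_mul_X_pow_eq_monomial).symm
          rw [hrsum, Finset.sum_smul, map_sum]
          apply Submodule.sum_mem
          intro t ht
          have hts : (C (r.coeff t) * X ^ t) • G j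
              = r.coeff t • (((X : Polynomial K) ^ t) • G j) := by
            rw [mul_smul, hCsmul]
          rw [hts, map_smul]
          exact Submodule.smul_mem _ _
            (Submodule.subset_span ⟨⟨j, ⟨t, Finset.mem_range.mp ht⟩⟩, rfl⟩)
      set w : Fin ℓ → Polynomial K := h • G j with hwdef
      set v' : Fin ℓ → Polynomial K := w - f • (Pi.single j (1 : Polynomial K) : Fin ℓ → Polynomial K) with hv'def
      have hv'M : v' ∈ M := Submodule.sub_mem _ (Submodule.smul_mem _ _ (hrow j)) (hMe j)
      have hv'app : ∀ k : Fin ℓ, v' k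
          = h * G j k - f * (Pi.single j (1 : Polynomial K) : Fin ℓ → Polynomial K) k :=
        fun k => rfl
      have hv'0 : ∀ k, k ≤ j → v' k = 0 := by
        intro k hk
        rcases eq_or_lt_of_le hk with heq | hlt
        · rw [hv'app, heq, Pi.single_eq_same, hh]
          ring
        · rw [hv'app, Pi.single_eq_of_ne (ne_of_lt hlt), hupper j k hlt]
          ring
      obtain ⟨c, hc0, hcsum⟩ := lemA j v' hv'M hv'0
      have hsplit2 : Φ (p • G j) = Φ (r • G j) + Φ ((h' * q) • G j) := by
        rw [← map_add, ← add_smul, ← hpsplit]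
      rw [hsplit2]
      refine Submodule.add_mem _ part1 ?_
      set a : Polynomial K := C h.leadingCoeff⁻¹ * q with ha
      have hexp : (h' * q) • G j
          = a • v' + (a * f) • (Pi.single j (1 : Polynomial K) : Fin ℓ → Polynomial K) := by
        rw [hv'def, smul_sub, ← smul_smul a f, sub_add_cancel, hwdef, smul_smul]
        congr 1
        rw [hh', ha]; ring
      rw [hexp, map_add]
      refine Submodule.add_mem _ ?_ ?_
      · rw [hcsum, Finset.smul_sum, map_sum]
        apply Submodule.sum_mem
        intro k _
        by_cases hk : k ≤ j
        · rw [hc0 k hk]; simp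
        · push_neg at hk
          rw [smul_smul]
          refine ih k ?_ _
          have h1 := Fin.lt_def.mp hk
          have h2 := k.isLt
          omega
      · have hdvd : ∀ k,
            f ∣ ((a * f) • (Pi.single j (1 : Polynomial K) : Fin ℓ → Polynomial K)) k := by
          intro k
          have happ : ((a * f) • (Pi.single j (1 : Polynomial K) : Fin ℓ → Polynomial K)) k
              = (a * f) * (Pi.single j (1 : Polynomial K) : Fin ℓ → Polynomial K) k := rfl
          by_cases hkj : k = j
          · rw [happ, hkj, Pi.single_eq_same, mul_one]
            exact dvd_mul_left f a
          · rw [happ, Pi.single_eq_of_ne hkj, mul_zero]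
            exact dvd_zero f
        rw [hPhi0 _ hdvd]
        exact Submodule.zero_mem _
  -- Code = S
  have hCS : Code = S := by
    apply le_antisymm
    · rw [hCode]
      rintro x ⟨v, hvM, rfl⟩
      have hvM' : v ∈ M := hvM
      rw [hM] at hvM'
      obtain ⟨c, hc⟩ := (Submodule.mem_span_range_iff_exists_fun (Polynomial K)).mp hvM'
      rw [← hc, map_sum]
      refine Submodule.sum_mem _ fun k _ => claim1 ℓ k (by omega) (c k)
    · rw [hCode, hS]
      apply Submodule.span_le.mpr
      rintro x ⟨⟨j, t⟩, rfl⟩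
      refine ⟨(X : Polynomial K) ^ (t : ℕ) • G j, Submodule.smul_mem _ _ (hrow j), ?_⟩
      rw [hb]
  -- linear independence of b
  have hli : LinearIndependent K b := by
    rw [Fintype.linearIndependent_iff]
    intro g hg
    set P : Fin ℓ → Polynomial K :=
      fun j => ∑ t : Fin (m - d j), C (g ⟨j, t⟩) * X ^ (t : ℕ) with hP
    have hPdlt : ∀ j, (P j).degree < ((m - d j : ℕ) : WithBot ℕ) := by
      intro j
      have : P j ∈ degreeLT K (m - d j) := by
        apply Submodule.sum_mem
        intro t _
        exact mem_degreeLT.mpr (lt_of_le_of_lt (degree_C_mul_X_pow_le _ _)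
          (by exact_mod_cast t.isLt))
      exact mem_degreeLT.mp this
    have hterm : ∀ j, Φ (P j • G j) = ∑ t : Fin (m - d j), g ⟨j, t⟩ • b ⟨j, t⟩ := by
      intro j
      rw [hP, Finset.sum_smul, map_sum]
      refine Finset.sum_congr rfl fun t _ => ?_
      rw [mul_smul, hCsmul, map_smul]
    have hgsum : Φ (∑ j, P j • G j) = 0 := by
      rw [map_sum]
      rw [← Finset.univ_sigma_univ, Finset.sum_sigma] at hg
      rw [← hg]
      exact Finset.sum_congr rfl fun j _ => hterm j
    have hdvd : ∀ k, f ∣ (∑ j, P j • G j) k := hPhiDvd _ hgsum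
    have hP0 : ∀ j, P j = 0 := by
      have key : ∀ N : ℕ, ∀ j : Fin ℓ, (j : ℕ) < N → P j = 0 := by
        intro N
        induction N with
        | zero => intro j hj; omega
        | succ N ih =>
          intro j hj
          have hcomp : (∑ i, P i • G i) j = P j * G j j := by
            rw [Finset.sum_apply]
            have : ∀ i : Fin ℓ, (P i • G i) j = P i * G i j := fun i => rfl
            rw [Finset.sum_congr rfl fun i _ => this i]
            apply Finset.sum_eq_single
            · intro i _ hij
              rcases lt_or_gt_of_ne hij with hlt | hgt
              · have hiN : (i : ℕ) < N := by
                  have := Fin.lt_def.mp hlt; omega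
                rw [ih i hiN, zero_mul]
              · rw [hupper i j hgt, mul_zero]
            · intro h; exact absurd (Finset.mem_univ j) h
          by_contra hPj
          have hne : P j * G j j ≠ 0 := mul_ne_zero hPj (hg0 j)
          have hnd : (P j).natDegree < m - d j :=
            (natDegree_lt_iff_degree_lt hPj).mpr (hPdlt j)
          have hnd2 : (P j * G j j).natDegree < m := by
            rw [natDegree_mul hPj (hg0 j)]
            have := hdle j
            have hdj : (G j j).natDegree = d j := rfl
            omega
          have hdlt : (P j * G j j).degree < f.degree := by
            rw [degree_eq_natDegree hne, hfdeg]
            exact_mod_cast hnd2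
          have := eq_zero_of_dvd_of_degree_lt (hcomp ▸ hdvd j) hdlt
          exact hne this
      exact fun j => key ℓ j j.isLt
    rintro ⟨j, t⟩
    have hcoeff : (P j).coeff (t : ℕ) = g ⟨j, t⟩ := by
      rw [hP]
      rw [finset_sum_coeff]
      have : ∀ s : Fin (m - d j),
          (C (g ⟨j, s⟩) * X ^ (s : ℕ)).coeff (t : ℕ) = if s = t then g ⟨j, s⟩ else 0 := by
        intro s
        rw [coeff_C_mul, coeff_X_pow]
        by_cases hst : s = t
        · subst hst; simp
        · rw [if_neg (fun hc => hst (Fin.val_inj.mp hc.symm)), if_neg hst, mul_zero]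
      rw [Finset.sum_congr rfl fun s _ => this s]
      simp
    rw [← hcoeff, hP0 j, coeff_zero]
  -- conclusion
  have hcard : Fintype.card (Σ j : Fin ℓ, Fin (m - d j)) = ∑ j : Fin ℓ, (m - d j) := by
    simp [Fintype.card_sigma]
  rw [hCS, hS, finrank_span_eq_card hli, hcard]
  rw [Finset.sum_tsub_distrib Finset.univ fun j _ => hdle j]
  simp [Finset.sum_const, mul_comm]
end

section
/- Let C be a λ-QT code of index ℓ with eigenvalues β_1,...,β_t having eigenspaces of dimensions n_1,...,n_t. Form H_i = (1, β_i, ..., β_i^{m-1}) ⊗ V_i, where the rows of V_i are a basis of the eigenspace of β_i, and stack the H_i into the matrix H. Then H has rank mℓ - dim_{F_q}(C). -/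
open Polynomial

section Aux
open Matrix

theorem snf_package {K : Type*} [Field K] {ℓ : ℕ} (f : K[X]) (hf : f ≠ 0)
    (G : Matrix (Fin ℓ) (Fin ℓ) K[X]) (hdet : G.det ≠ 0)
    (N : Submodule K[X] (Fin ℓ → K[X]))
    (hN : N = Submodule.span K[X] (Set.range fun i => G i))
    (hNe : ∀ j, (f • (Pi.single j 1 : Fin ℓ → K[X])) ∈ N) :
    ∃ (a : Fin ℓ → K[X]) (Cm Sm : Matrix (Fin ℓ) (Fin ℓ) K[X]),
      (∀ j, a j ∣ f) ∧ IsUnit Cm.det ∧ IsUnit Sm.det ∧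
      G = Cm * Matrix.diagonal a * Sm ∧
      Nonempty (((Fin ℓ → K[X]) ⧸ N) ≃ₗ[K[X]] Π j, K[X] ⧸ Ideal.span {a j}) := by
  classical
  obtain ⟨nn, snf⟩ := N.smithNormalForm (Pi.basisFun K[X] (Fin ℓ))
  -- nn = ℓ
  have hcard : ℓ = nn := by
    have h1 : nn ≤ ℓ := by simpa using Fintype.card_le_of_embedding snf.f
    have h2 : ℓ ≤ nn := by
      have hli : LinearIndependent K[X]
          (fun j : Fin ℓ => (⟨f • (Pi.single j 1 : Fin ℓ → K[X]), hNe j⟩ : N)) := by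
        rw [Fintype.linearIndependent_iff]
        intro g hg j
        have hg' : ∑ i, g i • (f • (Pi.single i 1 : Fin ℓ → K[X])) = 0 := by
          have := congrArg (N.subtype) hg
          simpa [map_sum] using this
        have := congrFun hg' j
        simp only [Finset.sum_apply, Pi.smul_apply, Pi.zero_apply, smul_eq_mul] at this
        rw [Finset.sum_eq_single j] at this
        · simp only [Pi.single_eq_same, mul_one] at this
          rcases mul_eq_zero.mp this with h | h
          · exact h
          · exact absurd h hf
        · intro b _ hb
          simp [Pi.single_eq_of_ne' hb]
        · simp
      have : Module.Finite K[X] N := Module.Finite.of_basis snf.bN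
      have := hli.fintype_card_le_finrank
      simpa [Module.finrank_eq_card_basis snf.bN] using this
    omega
  subst hcard
  have hbij : Function.Bijective snf.f :=
    (Finite.injective_iff_bijective).mp snf.f.injective
  let σ : Fin ℓ ≃ Fin ℓ := Equiv.ofBijective snf.f hbij
  have hσ : ∀ j, snf.f j = σ j := fun j => rfl
  let a : Fin ℓ → K[X] := fun j => snf.a (σ.symm j)
  have hsnf : ∀ j : Fin ℓ, (snf.bN (σ.symm j) : Fin ℓ → K[X]) = a j • snf.bM j := by
    intro j
    rw [snf.snf]
    congr 2
    show σ (σ.symm j) = j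
    exact Equiv.apply_symm_apply σ j
  -- membership characterization
  have hmemD : ∀ v : Fin ℓ → K[X], v ∈ N → ∀ j, a j ∣ snf.bM.repr v j := by
    intro v hv j
    have h := snf.repr_apply_embedding_eq_repr_smul (⟨v, hv⟩ : N) (i := σ.symm j)
    rw [hσ, Equiv.apply_symm_apply] at h
    have h2 : snf.bM.repr v j = a j * snf.bN.repr ⟨v, hv⟩ (σ.symm j) := by
      rw [show ((⟨v, hv⟩ : N) : Fin ℓ → K[X]) = v from rfl] at h
      rw [h, LinearEquiv.map_smul]
      simp [a]
    exact Dvd.intro _ h2.symm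
  have hmemU : ∀ v : Fin ℓ → K[X], (∀ j, a j ∣ snf.bM.repr v j) → v ∈ N := by
    intro v hd
    choose c hc using hd
    have hv : v = ∑ j, c j • (snf.bN (σ.symm j) : Fin ℓ → K[X]) := by
      conv_lhs => rw [← snf.bM.sum_repr v]
      refine Finset.sum_congr rfl fun j _ => ?_
      rw [hsnf j, smul_smul, hc j, mul_comm]
    rw [hv]
    exact Submodule.sum_mem _ fun j _ => Submodule.smul_mem _ _ (snf.bN (σ.symm j)).2
  -- a j divides f, and is nonzero
  have hdvd : ∀ j, a j ∣ f := by
    intro j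
    have hmem : f • (snf.bM j : Fin ℓ → K[X]) ∈ N := by
      have hrep : f • (snf.bM j : Fin ℓ → K[X])
          = ∑ k, snf.bM j k • (f • (Pi.single k 1 : Fin ℓ → K[X])) := by
        funext l
        simp only [Finset.sum_apply, Pi.smul_apply, smul_eq_mul, Pi.single_apply]
        rw [Finset.sum_eq_single l]
        · simp [mul_comm]
        · intro b _ hb
          rw [if_neg (fun he => hb he.symm)]
          ring
        · simp
      rw [hrep]
      exact Submodule.sum_mem _ fun k _ => Submodule.smul_mem _ _ (hNe k)
    have := hmemD _ hmem j
    rwa [LinearEquiv.map_smul, Finsupp.smul_apply, Module.Basis.repr_self,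
      Finsupp.single_eq_same, smul_eq_mul, mul_one] at this
  -- the rows of G in terms of the SNF basis
  have hGrow : ∀ i, G i ∈ N := by
    intro i; rw [hN]; exact Submodule.subset_span ⟨i, rfl⟩
  let Cm : Matrix (Fin ℓ) (Fin ℓ) K[X] :=
    Matrix.of fun i j => snf.bN.repr ⟨G i, hGrow i⟩ (σ.symm j)
  let Sm : Matrix (Fin ℓ) (Fin ℓ) K[X] := Matrix.of fun j k => snf.bM j k
  have hGexp : ∀ i k, G i k = ∑ j, Cm i j * a j * snf.bM j k := by
    intro i k
    have h0 : ((⟨G i, hGrow i⟩ : N) : Fin ℓ → K[X])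
        = ∑ u, snf.bN.repr ⟨G i, hGrow i⟩ u • (snf.bN u : Fin ℓ → K[X]) := by
      conv_lhs => rw [← snf.bN.sum_repr ⟨G i, hGrow i⟩]
      simp only [Submodule.coe_sum, Submodule.coe_smul]
    have h1 : G i = ∑ u, snf.bN.repr ⟨G i, hGrow i⟩ u • (snf.bN u : Fin ℓ → K[X]) := h0
    have h2 : G i = ∑ j, Cm i j • (a j • (snf.bM j : Fin ℓ → K[X])) := by
      rw [h1, ← Equiv.sum_comp σ.symm
        (fun u => snf.bN.repr ⟨G i, hGrow i⟩ u • (snf.bN u : Fin ℓ → K[X]))]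
      refine Finset.sum_congr rfl fun j _ => ?_
      rw [hsnf j]
      rfl
    have := congrFun h2 k
    simpa [Finset.sum_apply, mul_assoc] using this
  have hfact : G = Cm * Matrix.diagonal a * Sm := by
    refine Matrix.ext fun i k => ?_
    rw [Matrix.mul_apply]
    simp only [Matrix.mul_diagonal]
    exact hGexp i k
  -- Dmat with Dmat * G = diagonal a * Sm
  have hbNmem : ∀ j, ∃ d : Fin ℓ → K[X],
      ∑ i, d i • G i = (snf.bN (σ.symm j) : Fin ℓ → K[X]) := by
    intro j
    have : (snf.bN (σ.symm j) : Fin ℓ → K[X]) ∈ Submodule.span K[X] (Set.range fun i => G i) := by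
      rw [← hN]; exact (snf.bN (σ.symm j)).2
    exact (Submodule.mem_span_range_iff_exists_fun K[X]).mp this
  choose d hd using hbNmem
  let Dmat : Matrix (Fin ℓ) (Fin ℓ) K[X] := Matrix.of fun j i => d j i
  have hDG : Dmat * G = Matrix.diagonal a * Sm := by
    refine Matrix.ext fun j k => ?_
    have h1 := congrFun (hd j) k
    simp only [Finset.sum_apply, Pi.smul_apply, smul_eq_mul] at h1
    calc (Dmat * G) j k = ∑ i, d j i * G i k := by simp [Matrix.mul_apply, Dmat]
      _ = (snf.bN (σ.symm j) : Fin ℓ → K[X]) k := h1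
      _ = a j * snf.bM j k := by simpa using congrFun (hsnf j) k
      _ = (Matrix.diagonal a * Sm) j k := by simp [Matrix.diagonal_mul, Sm]
  have hCD : Cm * Dmat = 1 := by
    have h1 : (Cm * Dmat) * G = G := by
      rw [Matrix.mul_assoc, hDG, ← Matrix.mul_assoc, ← hfact]
    have h2 : ((Cm * Dmat) - 1) * G = 0 := by
      rw [Matrix.sub_mul, h1, Matrix.one_mul, sub_self]
    have h3 : G.det • ((Cm * Dmat) - 1) = 0 := by
      have h2' := congrArg (fun A => A * G.adjugate) h2
      simp only [Matrix.zero_mul] at h2'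
      rw [Matrix.mul_assoc, Matrix.mul_adjugate, Matrix.mul_smul, Matrix.mul_one] at h2'
      exact h2'
    have h4 : (Cm * Dmat) - 1 = 0 := by
      refine Matrix.ext fun i k => ?_
      have := congrFun (congrFun h3 i) k
      simp only [Matrix.smul_apply, smul_eq_mul, Matrix.zero_apply] at this
      rcases mul_eq_zero.mp this with h | h
      · exact absurd h hdet
      · exact h
    have := sub_eq_zero.mp h4
    simpa using this
  -- Sm is invertible
  have hSm : IsUnit Sm.det := by
    have hflip := Module.Basis.toMatrix_mul_toMatrix_flip (Pi.basisFun K[X] (Fin ℓ)) snf.bM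
    have hST : Sm.transpose = (Pi.basisFun K[X] (Fin ℓ)).toMatrix ⇑snf.bM := by
      refine Matrix.ext fun i j => ?_
      simp [Sm, Module.Basis.toMatrix, Matrix.transpose_apply]
    have : IsUnit ((Pi.basisFun K[X] (Fin ℓ)).toMatrix ⇑snf.bM).det :=
      IsUnit.of_mul_eq_one _ (by rw [← Matrix.det_mul, hflip, Matrix.det_one])
    rw [← hST] at this
    rwa [Matrix.det_transpose] at this
  have hCm : IsUnit Cm.det :=
    IsUnit.of_mul_eq_one _ (by rw [← Matrix.det_mul, hCD, Matrix.det_one])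
  -- the quotient equivalence
  have hmap : N.map (snf.bM.equivFun : (Fin ℓ → K[X]) →ₗ[K[X]] (Fin ℓ → K[X]))
      = Submodule.pi Set.univ (fun j => Ideal.span {a j}) := by
    ext c
    simp only [Submodule.mem_map, Submodule.mem_pi, Set.mem_univ, forall_true_left,
      Ideal.mem_span_singleton]
    constructor
    · rintro ⟨v, hv, rfl⟩ j
      have := hmemD v hv j
      simpa [Module.Basis.equivFun_apply] using this
    · intro hc
      refine ⟨snf.bM.equivFun.symm c, ?_, snf.bM.equivFun.apply_symm_apply c⟩
      apply hmemU
      intro j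
      have h5 : snf.bM.repr (snf.bM.equivFun.symm c) j
          = snf.bM.equivFun (snf.bM.equivFun.symm c) j :=
        (congrFun (snf.bM.equivFun_apply (snf.bM.equivFun.symm c)) j).symm
      rw [h5, snf.bM.equivFun.apply_symm_apply]
      exact hc j
  refine ⟨a, Cm, Sm, hdvd, hCm, hSm, hfact, ⟨?_⟩⟩
  exact (Submodule.Quotient.equiv N _ snf.bM.equivFun hmap).trans
    (Submodule.quotientPi (fun j => Ideal.span {a j}))

end Aux

set_option maxHeartbeats 2000000 in
open Matrix in
/-- (Rank of the spectral parity-check matrix.) Let `C` be a λ-QT code of index `ℓ` with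
eigenvalues `β_1, …, β_t` (the roots of `det G̃(x)` in the splitting field `F`) whose
eigenspaces (null spaces of `G̃(β_i)`) have dimensions `n_i` and basis matrices `V_i`.
Stacking the blocks `H_i = (1, β_i, …, β_i^{m-1}) ⊗ V_i` into `H`, the matrix `H` has
rank `mℓ - dim_K C`. -/
theorem spectral_parity_check_rank
    (K : Type*) [Field K] [Fintype K] (m ℓ : ℕ) (hm : 0 < m) (hℓ : 0 < ℓ)
    (hgcd : Nat.gcd m (Fintype.card K) = 1) (lam : K) (hlam : lam ≠ 0)
    (F : Type*) [Field F] [Algebra K F]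
    (hsplit : Polynomial.Splits (((X : Polynomial K) ^ m - C lam).map (algebraMap K F)))
    (I : Ideal (Polynomial K)) (hI : I = Ideal.span {(X : Polynomial K) ^ m - C lam})
    (G : Matrix (Fin ℓ) (Fin ℓ) (Polynomial K))
    (hupper : ∀ i j : Fin ℓ, j < i → G i j = 0)
    (hdiv : ∀ j : Fin ℓ, G j j ∣ (X : Polynomial K) ^ m - C lam)
    (hdeg : ∀ i j : Fin ℓ, i < j → (G i j).degree < (G j j).degree)
    (hfull : ∀ i j : Fin ℓ, i ≠ j → G j j = (X : Polynomial K) ^ m - C lam → G i j = 0)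
    (M : Submodule (Polynomial K) (Fin ℓ → Polynomial K))
    (hM : M = Submodule.span (Polynomial K) (Set.range (fun i : Fin ℓ => G i)))
    (hMe : ∀ j : Fin ℓ,
      (((X : Polynomial K) ^ m - C lam) • (Pi.single j 1 : Fin ℓ → Polynomial K)) ∈ M)
    (Φ : (Fin ℓ → Polynomial K) →ₗ[K] (Fin ℓ → Polynomial K ⧸ I))
    (hΦ : Φ = LinearMap.pi (fun j : Fin ℓ =>
      (Ideal.Quotient.mkₐ K I).toLinearMap.comp
        (LinearMap.proj j : (Fin ℓ → Polynomial K) →ₗ[K] Polynomial K)))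
    (Code : Submodule K (Fin ℓ → Polynomial K ⧸ I))
    (hCode : Code = Submodule.map Φ (M.restrictScalars K))
    -- the eigenvalues β_1, …, β_t and their eigenspaces
    (t : ℕ) (β : Fin t → F) (hβinj : Function.Injective β)
    (hβroot : ∀ i : Fin t, Polynomial.aeval (β i) G.det = 0)
    (hβall : ∀ x : F, Polynomial.aeval x G.det = 0 → ∃ i : Fin t, x = β i)
    (n : Fin t → ℕ) (V : (i : Fin t) → Matrix (Fin (n i)) (Fin ℓ) F)
    (hVli : ∀ i : Fin t, LinearIndependent F (fun r : Fin (n i) => V i r))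
    (hVspan : ∀ i : Fin t, Submodule.span F (Set.range (fun r : Fin (n i) => V i r))
      = LinearMap.ker (Matrix.toLin' (G.map (fun p => Polynomial.aeval (β i) p))))
    (H : Matrix ((i : Fin t) × Fin (n i)) (Fin m × Fin ℓ) F)
    (hH : H = fun p q => β p.1 ^ (q.1 : ℕ) * V p.1 p.2 q.2) :
    H.rank = m * ℓ - Module.finrank K Code := by
  classical
  set f : K[X] := (X : K[X]) ^ m - C lam with hfdef
  have hf0 : f ≠ 0 := X_pow_sub_C_ne_zero hm lam
  have hfdeg : f.natDegree = m := natDegree_X_pow_sub_C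
  -- det G ≠ 0
  have hdetG : G.det ≠ 0 := by
    rw [Matrix.det_of_upperTriangular hupper]
    exact Finset.prod_ne_zero_iff.mpr fun j _ hj =>
      hf0 (eq_zero_of_zero_dvd (hj ▸ hdiv j))
  obtain ⟨a, Cm, Sm, hdvd, hCm, hSm, hfact, ⟨E⟩⟩ := snf_package f hf0 G hdetG M hM hMe
  have ha0 : ∀ j, a j ≠ 0 := fun j h => hf0 (eq_zero_of_zero_dvd (h ▸ hdvd j))
  -- separability of f
  have hmK : (m : K) ≠ 0 := by
    intro h
    have hp1 : ringChar K ∣ m := (ringChar.spec K m).mp h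
    have hp2 : ringChar K ∣ Fintype.card K :=
      (ringChar.spec K (Fintype.card K)).mp (FiniteField.cast_card_eq_zero K)
    have hd1 : ringChar K ∣ 1 := hgcd ▸ Nat.dvd_gcd hp1 hp2
    have h1 : ringChar K = 1 := Nat.dvd_one.mp hd1
    haveI : CharP K 1 := h1 ▸ ringChar.charP K
    exact CharP.char_ne_one K 1 rfl
  have hsep : f.Separable := separable_X_pow_sub_C lam hmK hlam
  -- facts about evaluated determinant
  have hdet_eval : ∀ x : F, ∀ j, aeval x (a j) = 0 → aeval x G.det = 0 := by
    intro x j hx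
    rw [hfact]
    rw [Matrix.det_mul, Matrix.det_mul, Matrix.det_diagonal]
    simp only [_root_.map_mul]
    rw [map_prod]
    rw [Finset.prod_eq_zero (Finset.mem_univ j) hx]
    ring
  have hdet_eval' : ∀ x : F, aeval x G.det = 0 → ∃ j, aeval x (a j) = 0 := by
    intro x hx
    rw [hfact, Matrix.det_mul, Matrix.det_mul, Matrix.det_diagonal] at hx
    simp only [_root_.map_mul, map_prod] at hx
    rcases mul_eq_zero.mp hx with hx' | hS
    · rcases mul_eq_zero.mp hx' with hC | hprod
      · exact absurd hC (IsUnit.ne_zero (hCm.map (aeval x : K[X] →ₐ[K] F)))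
      · obtain ⟨j, _, hj⟩ := Finset.prod_eq_zero_iff.mp hprod
        exact ⟨j, hj⟩
    · exact absurd hS (IsUnit.ne_zero (hSm.map (aeval x : K[X] →ₐ[K] F)))
  -- roots of f in F
  have hβf : ∀ i : Fin t, aeval (β i) f = 0 := by
    intro i
    obtain ⟨j, hj⟩ := hdet_eval' (β i) (hβroot i)
    obtain ⟨c, hc⟩ := hdvd j
    rw [hc, _root_.map_mul, hj, zero_mul]
  -- t ≤ m
  have htm : t ≤ m := by
    set fF := f.map (algebraMap K F) with hfF
    have hfF0 : fF ≠ 0 := (Polynomial.map_ne_zero_iff (algebraMap K F).injective).mpr hf0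
    have hsub : ∀ i : Fin t, β i ∈ fF.roots.toFinset := by
      intro i
      rw [Multiset.mem_toFinset, mem_roots hfF0, IsRoot.def, eval_map, ← aeval_def]
      exact hβf i
    have := Finset.card_le_card_of_injOn (s := (Finset.univ : Finset (Fin t))) β
      (fun i _ => hsub i) (Function.Injective.injOn hβinj)
    simp only [Finset.card_univ, Fintype.card_fin] at this
    refine this.trans ?_
    refine (Multiset.toFinset_card_le _).trans ?_
    refine (Polynomial.card_roots' fF).trans ?_
    rw [Polynomial.natDegree_map_eq_of_injective (algebraMap K F).injective, hfdeg]
  -- Code dimension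
  subst hI
  haveI hfinR : Module.Finite K (K[X] ⧸ Ideal.span {f}) :=
    Module.Finite.of_basis (AdjoinRoot.powerBasis hf0).basis
  have hfrR : Module.finrank K (K[X] ⧸ Ideal.span {f}) = m := by
    have h : Module.finrank K (AdjoinRoot f) = f.natDegree := by
      rw [(AdjoinRoot.powerBasis hf0).finrank, AdjoinRoot.powerBasis_dim]
    rw [← hfdeg]; exact h
  have hfrRl : Module.finrank K (Fin ℓ → K[X] ⧸ Ideal.span {f}) = ℓ * m := by
    rw [Module.finrank_pi_fintype, Finset.sum_congr rfl fun (j : Fin ℓ) _ => hfrR]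
    simp [Finset.sum_const, mul_comm]
  set ψ : (Fin ℓ → K[X]) →ₗ[K] ((Fin ℓ → K[X] ⧸ Ideal.span {f}) ⧸ Code) :=
    (Submodule.mkQ Code) ∘ₗ Φ with hψ
  have hΦapp : ∀ (v : Fin ℓ → K[X]) (j : Fin ℓ),
      Φ v j = Ideal.Quotient.mk (Ideal.span {f}) (v j) := by
    intro v j
    rw [hΦ]
    rfl
  have hΦsurj : Function.Surjective Φ := by
    intro y
    choose g hg using fun j => Ideal.Quotient.mk_surjective (y j)
    refine ⟨fun j => g j, ?_⟩
    funext j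
    rw [hΦapp]
    exact hg j
  have hψsurj : Function.Surjective ψ := (Submodule.mkQ_surjective Code).comp hΦsurj
  have hkerΦmem : ∀ x : Fin ℓ → K[X],
      (∀ j, x j ∈ Ideal.span ({f} : Set K[X])) → x ∈ M := by
    intro x hx
    choose c hc using fun j => Ideal.mem_span_singleton.mp (hx j)
    have hxsum : x = ∑ j, (c j) • (f • (Pi.single j 1 : Fin ℓ → K[X])) := by
      funext l
      simp only [Finset.sum_apply, Pi.smul_apply, smul_eq_mul, Pi.single_apply]
      rw [Finset.sum_eq_single l]
      · rw [if_pos rfl, mul_one, hc l, mul_comm]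
      · intro b _ hb
        rw [if_neg (fun he => hb he.symm)]
        ring
      · simp
    rw [hxsum]
    exact Submodule.sum_mem _ fun j _ => Submodule.smul_mem _ _ (hMe j)
  have hkerψ : LinearMap.ker ψ = M.restrictScalars K := by
    ext v
    simp only [LinearMap.mem_ker, hψ, LinearMap.comp_apply, Submodule.mkQ_apply,
      Submodule.Quotient.mk_eq_zero, Submodule.restrictScalars_mem]
    rw [hCode]
    constructor
    · rintro hmem
      obtain ⟨u, hu, huv⟩ := hmem
      have hdiff : ∀ j, (v - u) j ∈ Ideal.span ({f} : Set K[X]) := by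
        intro j
        have h0 : Φ (v - u) = 0 := by rw [map_sub, huv, sub_self]
        have h1 := congrFun h0 j
        rw [hΦapp] at h1
        exact Ideal.Quotient.eq_zero_iff_mem.mp h1
      have hvu := hkerΦmem _ hdiff
      have : v = (v - u) + u := by abel
      rw [this]
      exact M.add_mem hvu hu
    · intro hv
      exact Submodule.mem_map_of_mem hv
  have hquot1 : Module.finrank K ((Fin ℓ → K[X] ⧸ Ideal.span {f}) ⧸ Code)
      = Module.finrank K ((Fin ℓ → K[X]) ⧸ M.restrictScalars K) := by
    rw [← hkerψ]
    exact (LinearMap.quotKerEquivOfSurjective ψ hψsurj).finrank_eq.symm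
  have hquot2 : Module.finrank K ((Fin ℓ → K[X]) ⧸ M.restrictScalars K)
      = ∑ j, (a j).natDegree := by
    rw [(Submodule.Quotient.restrictScalarsEquiv K M).finrank_eq]
    rw [(E.restrictScalars K).finrank_eq]
    haveI inst : ∀ j, Module.Finite K (K[X] ⧸ Ideal.span {a j}) := fun j =>
      Module.Finite.of_basis (AdjoinRoot.powerBasis (ha0 j)).basis
    rw [Module.finrank_pi_fintype]
    refine Finset.sum_congr rfl fun j _ => ?_
    have h : Module.finrank K (AdjoinRoot (a j)) = (a j).natDegree := by
      rw [(AdjoinRoot.powerBasis (ha0 j)).finrank, AdjoinRoot.powerBasis_dim]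
    exact h
  have hCodeDim : ∑ j, (a j).natDegree + Module.finrank K Code = ℓ * m := by
    have h := Submodule.finrank_quotient_add_finrank Code
    rw [hquot1, hquot2, hfrRl] at h
    exact h
  -- n i equals the number of j with (a j)(β i) = 0
  have hni : ∀ i : Fin t, n i = Fintype.card {j : Fin ℓ // aeval (β i) (a j) = 0} := by
    intro i
    set φ : K[X] →+* F := (aeval (β i) : K[X] →ₐ[K] F).toRingHom with hφ
    have hφa : ∀ p : K[X], φ p = aeval (β i) p := fun p => rfl
    set Aβ : Matrix (Fin ℓ) (Fin ℓ) F := G.map (fun p => aeval (β i) p) with hAβ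
    have hmapfact : Aβ = (Cm.map φ) * Matrix.diagonal (fun j => φ (a j)) * (Sm.map φ) := by
      rw [hAβ, hfact]
      have h1 : ((Cm * Matrix.diagonal a * Sm).map (fun p => aeval (β i) p))
          = (Cm * Matrix.diagonal a * Sm).map φ := rfl
      rw [h1, Matrix.map_mul, Matrix.map_mul, Matrix.diagonal_map (map_zero φ)]
    have hCu : IsUnit (Cm.map φ).det := by
      have hdm : φ Cm.det = (Cm.map ⇑φ).det := φ.map_det Cm
      rw [← hdm]; exact hCm.map φ
    have hSu : IsUnit (Sm.map φ).det := by
      have hdm : φ Sm.det = (Sm.map ⇑φ).det := φ.map_det Sm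
      rw [← hdm]; exact hSm.map φ
    have hrank : Aβ.rank = Fintype.card {j : Fin ℓ // φ (a j) ≠ 0} := by
      rw [hmapfact, Matrix.rank_mul_eq_left_of_isUnit_det _ _ hSu,
        Matrix.rank_mul_eq_right_of_isUnit_det _ _ hCu, Matrix.rank_diagonal]
    have h1 : n i = Module.finrank F (LinearMap.ker (Matrix.toLin' Aβ)) := by
      rw [← hVspan i, finrank_span_eq_card (hVli i), Fintype.card_fin]
    have hker_eq : LinearMap.ker (Matrix.toLin' Aβ) = LinearMap.ker (Matrix.mulVecLin Aβ) := by
      ext v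
      simp [LinearMap.mem_ker, Matrix.toLin'_apply, Matrix.mulVecLin_apply]
    have h2 := LinearMap.finrank_range_add_finrank_ker (Matrix.mulVecLin Aβ)
    rw [Module.finrank_pi] at h2
    have h2' : Aβ.rank + Module.finrank F (LinearMap.ker (Matrix.mulVecLin Aβ))
        = Fintype.card (Fin ℓ) := h2
    rw [Fintype.card_fin] at h2'
    have h3 : Fintype.card {j : Fin ℓ // φ (a j) = 0}
        = Fintype.card (Fin ℓ) - Fintype.card {j : Fin ℓ // φ (a j) ≠ 0} := by
      rw [← Fintype.card_subtype_compl]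
      exact Fintype.card_congr (Equiv.subtypeEquivRight (fun j => not_not.symm))
    rw [Fintype.card_fin] at h3
    have hle : Fintype.card {j : Fin ℓ // φ (a j) ≠ 0} ≤ ℓ := by
      have := Fintype.card_subtype_le (fun j : Fin ℓ => φ (a j) ≠ 0)
      simpa using this
    have hfin : Fintype.card {j : Fin ℓ // aeval (β i) (a j) = 0}
        = Fintype.card {j : Fin ℓ // φ (a j) = 0} := rfl
    rw [h1, hker_eq, hfin, h3]
    omega
  -- counting roots: for each j, the number of eigenvalues annihilating a j is natDegree (a j)
  have hcount : ∀ j : Fin ℓ,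
      Fintype.card {i : Fin t // aeval (β i) (a j) = 0} = (a j).natDegree := by
    intro j
    set q : F[X] := (a j).map (algebraMap K F) with hq
    have hq0 : q ≠ 0 := (Polynomial.map_ne_zero_iff (algebraMap K F).injective).mpr (ha0 j)
    have hqd : q.natDegree = (a j).natDegree :=
      Polynomial.natDegree_map_eq_of_injective (algebraMap K F).injective _
    have hfF0 : f.map (algebraMap K F) ≠ 0 :=
      (Polynomial.map_ne_zero_iff (algebraMap K F).injective).mpr hf0
    have hsplitf : Splits (f.map (algebraMap K F)) := by
      exact hsplit
    have hqsplit : Splits q :=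
      hsplitf.of_dvd hfF0 (Polynomial.map_dvd _ (hdvd j))
    have hqsep : q.Separable := (hsep.map).of_dvd (Polynomial.map_dvd _ (hdvd j))
    have hnodup : q.roots.Nodup := Polynomial.nodup_roots hqsep
    have hevq : ∀ x : F, eval x q = aeval x (a j) := by
      intro x
      rw [hq, eval_map, aeval_def]
    have himg : q.roots.toFinset
        = Finset.image β (Finset.univ.filter fun i => aeval (β i) (a j) = 0) := by
      ext x
      simp only [Multiset.mem_toFinset, mem_roots hq0, IsRoot.def, Finset.mem_image,
        Finset.mem_filter, Finset.mem_univ, true_and]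
      constructor
      · intro hx
        have hx' : aeval x (a j) = 0 := by rw [← hevq]; exact hx
        obtain ⟨i, rfl⟩ := hβall x (hdet_eval x j hx')
        exact ⟨i, hx', rfl⟩
      · rintro ⟨i, hi, rfl⟩
        rw [hevq]
        exact hi
    calc Fintype.card {i : Fin t // aeval (β i) (a j) = 0}
        = (Finset.univ.filter fun i => aeval (β i) (a j) = 0).card :=
          Fintype.card_subtype _
      _ = (Finset.image β (Finset.univ.filter fun i => aeval (β i) (a j) = 0)).card :=
          (Finset.card_image_of_injective _ hβinj).symm
      _ = q.roots.toFinset.card := by rw [himg]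
      _ = Multiset.card q.roots := Multiset.toFinset_card_of_nodup hnodup
      _ = q.natDegree := (Polynomial.splits_iff_card_roots.mp hqsplit)
      _ = (a j).natDegree := hqd
  -- double counting
  have hsum : ∑ i, n i = ∑ j, (a j).natDegree := by
    have hstep : ∀ i : Fin t, n i = ∑ j : Fin ℓ, if aeval (β i) (a j) = 0 then 1 else 0 := by
      intro i
      rw [hni i, Fintype.card_subtype, Finset.card_filter]
    have hstep2 : ∀ j : Fin ℓ,
        (a j).natDegree = ∑ i : Fin t, if aeval (β i) (a j) = 0 then 1 else 0 := by
      intro j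
      rw [← hcount j, Fintype.card_subtype, Finset.card_filter]
    calc ∑ i, n i = ∑ i : Fin t, ∑ j : Fin ℓ, if aeval (β i) (a j) = 0 then 1 else 0 :=
          Finset.sum_congr rfl fun i _ => hstep i
      _ = ∑ j : Fin ℓ, ∑ i : Fin t, if aeval (β i) (a j) = 0 then 1 else 0 :=
          Finset.sum_comm
      _ = ∑ j, (a j).natDegree := Finset.sum_congr rfl fun j _ => (hstep2 j).symm
  -- rank of H : rows are linearly independent
  subst hH
  have hli : LinearIndependent F (fun p : (Σ i : Fin t, Fin (n i)) =>
      (fun q : Fin m × Fin ℓ => β p.1 ^ (q.1 : ℕ) * V p.1 p.2 q.2)) := by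
    rw [Fintype.linearIndependent_iff]
    intro c hc
    have hkey : ∀ (k : Fin m) (j : Fin ℓ),
        ∑ i : Fin t, (∑ r : Fin (n i), c ⟨i, r⟩ * V i r j) * β i ^ (k : ℕ) = 0 := by
      intro k j
      have h0 := congrFun hc (k, j)
      simp only [Finset.sum_apply, Pi.smul_apply, smul_eq_mul, Pi.zero_apply] at h0
      rw [← h0, ← Finset.univ_sigma_univ, Finset.sum_sigma]
      refine Finset.sum_congr rfl fun i _ => ?_
      rw [Finset.sum_mul]
      refine Finset.sum_congr rfl fun r _ => ?_
      ring
    have hwz : ∀ (i : Fin t) (j : Fin ℓ), ∑ r : Fin (n i), c ⟨i, r⟩ * V i r j = 0 := by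
      intro i j
      have hu := Matrix.eq_zero_of_forall_pow_sum_mul_pow_eq_zero (R := F) hβinj
        (v := fun i : Fin t => ∑ r : Fin (n i), c ⟨i, r⟩ * V i r j)
        (fun k => by simpa using hkey (Fin.castLE htm k) j)
      exact congrFun hu i
    rintro ⟨i, r⟩
    have hVz : ∑ r : Fin (n i), c ⟨i, r⟩ • V i r = 0 := by
      funext j
      simpa using hwz i j
    exact Fintype.linearIndependent_iff.mp (hVli i) (fun r => c ⟨i, r⟩) hVz r
  have hrk : (show Matrix ((i : Fin t) × Fin (n i)) (Fin m × Fin ℓ) F from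
      fun p q => β p.1 ^ (q.1 : ℕ) * V p.1 p.2 q.2).rank = ∑ i, n i := by
    rw [← Matrix.rank_transpose, Matrix.rank_eq_finrank_span_cols, Matrix.col_transpose, Matrix.row,
      finrank_span_eq_card hli]
    simp [Fintype.card_sigma]
  have hml : m * ℓ = ℓ * m := Nat.mul_comm m ℓ
  rw [hrk, hsum]
  omega
end

section
/- The matrix H built from the eigenvalues and eigenspace bases of a λ-QT code C is a parity-check matrix for C: a vector c ∈ F_q^{mℓ} lies in C if and only if H c^T = 0. -/
open Polynomial Matrix

section Helpers

variable {F : Type*} [Field F]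

lemma range_transpose_mulVecLin' {s r : ℕ} (B : Matrix (Fin s) (Fin r) F) :
    LinearMap.range Bᵀ.mulVecLin = Submodule.span F (Set.range fun a => B a) := by
  rw [Matrix.range_mulVecLin]; rfl

lemma range_top_of_det_ne_zero' {l : ℕ} (A : Matrix (Fin l) (Fin l) F) (h : A.det ≠ 0) :
    LinearMap.range Aᵀ.mulVecLin = ⊤ := by
  rw [LinearMap.range_eq_top]
  intro y
  refine ⟨(Aᵀ)⁻¹.mulVec y, ?_⟩
  have hdet : IsUnit Aᵀ.det := by rwa [Matrix.det_transpose, isUnit_iff_ne_zero]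
  rw [Matrix.mulVecLin_apply, Matrix.mulVec_mulVec, Matrix.mul_nonsing_inv _ hdet,
    Matrix.one_mulVec]

lemma rowspace_eq_perp' {l nn : ℕ} (A : Matrix (Fin l) (Fin l) F) (W : Matrix (Fin nn) (Fin l) F)
    (hli : LinearIndependent F (fun r : Fin nn => W r))
    (hsp : Submodule.span F (Set.range fun r : Fin nn => W r) = LinearMap.ker A.mulVecLin) :
    LinearMap.range Aᵀ.mulVecLin = LinearMap.ker W.mulVecLin := by
  have hWA : W * Aᵀ = 0 := by
    ext r a
    have hmem : W r ∈ LinearMap.ker A.mulVecLin := by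
      rw [← hsp]; exact Submodule.subset_span ⟨r, rfl⟩
    have h0 : A.mulVec (W r) = 0 := hmem
    have : (W * Aᵀ) r a = A.mulVec (W r) a := by
      simp [Matrix.mul_apply, Matrix.mulVec, dotProduct, Matrix.transpose_apply, mul_comm]
    rw [this, h0]; rfl
  have hle : LinearMap.range Aᵀ.mulVecLin ≤ LinearMap.ker W.mulVecLin := by
    rintro u ⟨x, rfl⟩
    show W.mulVec (Aᵀ.mulVec x) = 0
    rw [Matrix.mulVec_mulVec, hWA, Matrix.zero_mulVec]
  have hkerA : Module.finrank F (LinearMap.ker A.mulVecLin) = nn := by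
    rw [← hsp, finrank_span_eq_card hli, Fintype.card_fin]
  have hVt : Wᵀ.rank = nn := by
    show Module.finrank F (LinearMap.range Wᵀ.mulVecLin) = nn
    rw [range_transpose_mulVecLin', finrank_span_eq_card hli, Fintype.card_fin]
  have hV : W.rank = nn := by rw [← Matrix.rank_transpose]; exact hVt
  have h1 : A.rank + nn = l := by
    have h := LinearMap.finrank_range_add_finrank_ker A.mulVecLin
    rw [hkerA, Module.finrank_pi, Fintype.card_fin] at h
    exact h
  have hr2 : Module.finrank F (LinearMap.range W.mulVecLin) = nn := hV
  have h2 : nn + Module.finrank F (LinearMap.ker W.mulVecLin) = l := by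
    have h := LinearMap.finrank_range_add_finrank_ker W.mulVecLin
    rw [Module.finrank_pi, Fintype.card_fin, hr2] at h
    exact h
  have hAt : Aᵀ.rank = A.rank := Matrix.rank_transpose A
  refine Submodule.eq_of_le_of_finrank_eq hle ?_
  show Aᵀ.rank = _
  omega

end Helpers

section Descent

variable (K F : Type*) [Field K] [Field F] [Algebra K F]

noncomputable def retractionKF : F →ₗ[K] K :=
  (LinearEquiv.ofInjective (Algebra.linearMap K F)
      (algebraMap K F).injective).symm.toLinearMap.comp
    (Submodule.projectionOnto (LinearMap.range (Algebra.linearMap K F))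
      (LinearMap.range (Algebra.linearMap K F)).exists_isCompl.choose
      (LinearMap.range (Algebra.linearMap K F)).exists_isCompl.choose_spec)

lemma retractionKF_algebraMap (a : K) : retractionKF K F (algebraMap K F a) = a := by
  have h1 : (algebraMap K F a) = Algebra.linearMap K F a := rfl
  rw [retractionKF]
  simp only [LinearMap.comp_apply, LinearEquiv.coe_toLinearMap]
  rw [h1, show Algebra.linearMap K F a
      = ((⟨Algebra.linearMap K F a, LinearMap.mem_range_self _ a⟩ :
        LinearMap.range (Algebra.linearMap K F)) : F) from rfl,
    Submodule.projectionOnto_apply_left]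
  rw [LinearEquiv.symm_apply_eq]
  rfl

lemma retractionKF_mul_algebraMap (x : F) (a : K) :
    retractionKF K F (x * algebraMap K F a) = retractionKF K F x * a := by
  rw [mul_comm, ← Algebra.smul_def, _root_.map_smul, smul_eq_mul, mul_comm]

noncomputable def Ppoly (f : Polynomial F) : Polynomial K :=
  ∑ nn ∈ f.support, Polynomial.C (retractionKF K F (f.coeff nn)) * X ^ nn

lemma coeff_Ppoly (f : Polynomial F) (k : ℕ) :
    (Ppoly K F f).coeff k = retractionKF K F (f.coeff k) := by
  rw [Ppoly, finset_sum_coeff]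
  simp only [coeff_C_mul, coeff_X_pow, mul_ite, mul_one, mul_zero]
  rw [Finset.sum_ite_eq f.support k (fun nn => retractionKF K F (f.coeff nn))]
  by_cases h : k ∈ f.support
  · simp [h]
  · simp [h, Polynomial.notMem_support_iff.mp h]

lemma Ppoly_map (g : Polynomial K) : Ppoly K F (g.map (algebraMap K F)) = g := by
  ext k
  rw [coeff_Ppoly, coeff_map]
  exact retractionKF_algebraMap K F _

lemma Ppoly_mul_map (f : Polynomial F) (g : Polynomial K) :
    Ppoly K F (f * g.map (algebraMap K F)) = Ppoly K F f * g := by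
  ext k
  rw [coeff_Ppoly, coeff_mul, coeff_mul, map_sum]
  refine Finset.sum_congr rfl fun p _ => ?_
  rw [coeff_map, retractionKF_mul_algebraMap, coeff_Ppoly]

lemma Ppoly_sum {ι : Type*} (s : Finset ι) (f : ι → Polynomial F) :
    Ppoly K F (∑ i ∈ s, f i) = ∑ i ∈ s, Ppoly K F (f i) := by
  ext k
  rw [coeff_Ppoly, finset_sum_coeff, finset_sum_coeff, map_sum]
  exact Finset.sum_congr rfl fun i _ => (coeff_Ppoly K F _ _).symm

end Descent

/-- (Spectral parity-check matrix.) The matrix `H` built from the eigenvalues and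
eigenspace bases of a λ-QT code `C` is a parity-check matrix for `C`: a vector
`c ∈ K^{mℓ}`, viewed as an `m×ℓ` array, lies in `C` if and only if `H c^T = 0`. -/
theorem spectral_parity_check_matrix
    (K : Type*) [Field K] [Fintype K] (m ℓ : ℕ) (hm : 0 < m) (hℓ : 0 < ℓ)
    (hgcd : Nat.gcd m (Fintype.card K) = 1) (lam : K) (hlam : lam ≠ 0)
    (F : Type*) [Field F] [Algebra K F]
    (hsplit : Polynomial.Splits (((X : Polynomial K) ^ m - C lam).map (algebraMap K F)))
    (I : Ideal (Polynomial K)) (hI : I = Ideal.span {(X : Polynomial K) ^ m - C lam})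
    (G : Matrix (Fin ℓ) (Fin ℓ) (Polynomial K))
    (hupper : ∀ i j : Fin ℓ, j < i → G i j = 0)
    (hdiv : ∀ j : Fin ℓ, G j j ∣ (X : Polynomial K) ^ m - C lam)
    (hdeg : ∀ i j : Fin ℓ, i < j → (G i j).degree < (G j j).degree)
    (hfull : ∀ i j : Fin ℓ, i ≠ j → G j j = (X : Polynomial K) ^ m - C lam → G i j = 0)
    (M : Submodule (Polynomial K) (Fin ℓ → Polynomial K))
    (hM : M = Submodule.span (Polynomial K) (Set.range (fun i : Fin ℓ => G i)))
    (hMe : ∀ j : Fin ℓ,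
      (((X : Polynomial K) ^ m - C lam) • (Pi.single j 1 : Fin ℓ → Polynomial K)) ∈ M)
    (Φ : (Fin ℓ → Polynomial K) →ₗ[K] (Fin ℓ → Polynomial K ⧸ I))
    (hΦ : Φ = LinearMap.pi (fun j : Fin ℓ =>
      (Ideal.Quotient.mkₐ K I).toLinearMap.comp
        (LinearMap.proj j : (Fin ℓ → Polynomial K) →ₗ[K] Polynomial K)))
    (Code : Submodule K (Fin ℓ → Polynomial K ⧸ I))
    (hCode : Code = Submodule.map Φ (M.restrictScalars K))
    -- the eigenvalues β_1, …, β_t and their eigenspaces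
    (t : ℕ) (β : Fin t → F) (hβinj : Function.Injective β)
    (hβroot : ∀ i : Fin t, Polynomial.aeval (β i) G.det = 0)
    (hβall : ∀ x : F, Polynomial.aeval x G.det = 0 → ∃ i : Fin t, x = β i)
    (n : Fin t → ℕ) (V : (i : Fin t) → Matrix (Fin (n i)) (Fin ℓ) F)
    (hVli : ∀ i : Fin t, LinearIndependent F (fun r : Fin (n i) => V i r))
    (hVspan : ∀ i : Fin t, Submodule.span F (Set.range (fun r : Fin (n i) => V i r))
      = LinearMap.ker (Matrix.toLin' (G.map (fun p => Polynomial.aeval (β i) p))))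
    (H : Matrix ((i : Fin t) × Fin (n i)) (Fin m × Fin ℓ) F)
    (hH : H = fun p q => β p.1 ^ (q.1 : ℕ) * V p.1 p.2 q.2)
    (c : Fin m → Fin ℓ → K) :
    (fun j : Fin ℓ => Ideal.Quotient.mk I (∑ k : Fin m, C (c k j) * X ^ (k : ℕ))) ∈ Code
      ↔ H.mulVec (fun q : Fin m × Fin ℓ => algebraMap K F (c q.1 q.2)) = 0 := by
  classical
  set φ : K →+* F := algebraMap K F with hφ
  set fK : Polynomial K := X ^ m - C lam with hfK
  set fF : Polynomial F := X ^ m - C (φ lam) with hfFdef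
  have hmapf : fK.map φ = fF := by
    simp [hfK, hfFdef, Polynomial.map_sub, Polynomial.map_pow, Polynomial.map_X,
      Polynomial.map_C]
  set cpoly : Fin ℓ → Polynomial K := fun j => ∑ k : Fin m, C (c k j) * X ^ (k : ℕ) with hcpoly
  set MF : Submodule (Polynomial F) (Fin ℓ → Polynomial F) :=
    Submodule.span (Polynomial F) (Set.range fun i : Fin ℓ => fun j => (G i j).map φ) with hMF
  -- basic facts
  have hmonK : fK.Monic := monic_X_pow_sub_C lam hm.ne'
  have hmonF : fF.Monic := by rw [← hmapf]; exact hmonK.map φ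
  have hfK0 : fK ≠ 0 := hmonK.ne_zero
  have hfF0 : fF ≠ 0 := hmonF.ne_zero
  have hmK : (m : K) ≠ 0 := by
    intro h
    obtain ⟨p, hpchar⟩ := CharP.exists K
    haveI := hpchar
    obtain ⟨nn, hp, hcard⟩ := FiniteField.card K p
    have hpm : p ∣ m := (CharP.cast_eq_zero_iff K p m).mp h
    have hpc : p ∣ Fintype.card K := by rw [hcard]; exact dvd_pow_self p nn.2.ne'
    have : p ∣ 1 := hgcd ▸ Nat.dvd_gcd hpm hpc
    exact hp.one_lt.ne' (Nat.dvd_one.mp this)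
  have hmF : (m : F) ≠ 0 := by
    intro h
    apply hmK
    have : φ (m : K) = 0 := by rw [map_natCast]; exact h
    exact (_root_.map_eq_zero φ).mp this
  have hlamF : φ lam ≠ 0 := by
    simp [_root_.map_eq_zero, hlam]
  have hsep : fF.Separable := separable_X_pow_sub_C (φ lam) hmF hlamF
  have hsplitF : fF.Splits := by
    rw [← hmapf]
    exact hsplit
  have hnd : fF.roots.Nodup := Polynomial.nodup_roots hsep
  have hprodroots : ∏ bv ∈ fF.roots.toFinset, (X - C bv) = fF := by
    conv_rhs => rw [hsplitF.eq_prod_roots_of_monic hmonF]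
    rw [Finset.prod, Multiset.toFinset_val, Multiset.dedup_eq_self.mpr hnd]
  -- membership in M maps to MF
  have hmapM : ∀ w : Fin ℓ → Polynomial K, w ∈ M → (fun j => (w j).map φ) ∈ MF := by
    intro w hw
    rw [hM, Submodule.mem_span_range_iff_exists_fun] at hw
    obtain ⟨a, ha⟩ := hw
    rw [hMF, Submodule.mem_span_range_iff_exists_fun]
    refine ⟨fun i => (a i).map φ, funext fun j => ?_⟩
    have hj := congrFun ha j
    simp only [Finset.sum_apply, Pi.smul_apply, smul_eq_mul] at hj ⊢
    rw [← hj, Polynomial.map_sum]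
    exact Finset.sum_congr rfl fun i _ => (Polynomial.map_mul φ).symm ▸ rfl
  -- descent from MF to M
  have hdescent : ∀ w : Fin ℓ → Polynomial K, (fun j => (w j).map φ) ∈ MF → w ∈ M := by
    intro w hw
    rw [hMF, Submodule.mem_span_range_iff_exists_fun] at hw
    obtain ⟨a, ha⟩ := hw
    rw [hM, Submodule.mem_span_range_iff_exists_fun]
    refine ⟨fun i => Ppoly K F (a i), funext fun j => ?_⟩
    have hj := congrFun ha j
    simp only [Finset.sum_apply, Pi.smul_apply, smul_eq_mul] at hj ⊢
    have := congrArg (Ppoly K F) hj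
    rw [Ppoly_sum, Ppoly_map] at this
    rw [← this]
    exact Finset.sum_congr rfl fun i _ => (Ppoly_mul_map K F (a i) (G i j)).symm
  -- divisibility by fK implies membership in M
  have hfK_dvd_mem : ∀ w : Fin ℓ → Polynomial K, (∀ j, fK ∣ w j) → w ∈ M := by
    intro w hwd
    choose r hr using hwd
    have hwsum : w = ∑ j, r j • (fK • (Pi.single j 1 : Fin ℓ → Polynomial K)) := by
      funext j'
      rw [Finset.sum_apply]
      rw [Finset.sum_eq_single j']
      · simp [Pi.single_apply, hr j', mul_comm]
      · intro b _ hb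
        simp [Pi.single_apply, hb]
      · intro hj'; exact absurd (Finset.mem_univ j') hj'
    rw [hwsum]
    exact Submodule.sum_mem _ fun j _ => Submodule.smul_mem _ _ (hMe j)
  -- divisibility by fF implies membership in MF
  have hMeF : ∀ j : Fin ℓ, (fF • (Pi.single j 1 : Fin ℓ → Polynomial F)) ∈ MF := by
    intro j
    have := hmapM _ (hMe j)
    have heq : (fun j' => ((fK • (Pi.single j 1 : Fin ℓ → Polynomial K)) j').map φ)
        = fF • (Pi.single j 1 : Fin ℓ → Polynomial F) := by
      funext j'
      by_cases h : j' = j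
      · subst h; simp [Pi.single_apply, hmapf, Polynomial.map_mul]
      · simp [Pi.single_apply, Ne.symm h, fun hh => h hh]
    rwa [heq] at this
  have hfF_dvd_mem : ∀ w : Fin ℓ → Polynomial F, (∀ j, fF ∣ w j) → w ∈ MF := by
    intro w hwd
    choose r hr using hwd
    have hwsum : w = ∑ j, r j • (fF • (Pi.single j 1 : Fin ℓ → Polynomial F)) := by
      funext j'
      rw [Finset.sum_apply]
      rw [Finset.sum_eq_single j']
      · simp [Pi.single_apply, hr j', mul_comm]
      · intro b _ hb
        simp [Pi.single_apply, hb]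
      · intro hj'; exact absurd (Finset.mem_univ j') hj'
    rw [hwsum]
    exact Submodule.sum_mem _ fun j _ => Submodule.smul_mem _ _ (hMeF j)
  -- Code membership iff cpoly ∈ M
  have hΦap : ∀ u : Fin ℓ → Polynomial K, ∀ j, Φ u j = Ideal.Quotient.mk I (u j) := by
    intro u j
    rw [hΦ]
    simp [LinearMap.pi_apply, Ideal.Quotient.mkₐ_eq_mk]
  have hCodeIff : ((fun j : Fin ℓ => Ideal.Quotient.mk I (cpoly j)) ∈ Code) ↔ cpoly ∈ M := by
    rw [hCode]
    constructor
    · rintro ⟨u, hu, huEq⟩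
      have hu' : u ∈ M := hu
      have h2 : ∀ j, fK ∣ (cpoly j - u j) := by
        intro j
        have h3 := congrFun huEq j
        rw [hΦap] at h3
        have h4 : Ideal.Quotient.mk I (cpoly j - u j) = 0 := by
          rw [map_sub, h3, sub_self]
        rw [Ideal.Quotient.eq_zero_iff_mem, hI, Ideal.mem_span_singleton] at h4
        exact h4
      have h5 : cpoly - u ∈ M := hfK_dvd_mem _ (fun j => by simpa using h2 j)
      have := M.add_mem hu' h5
      simpa using this
    · intro hmem
      refine ⟨cpoly, hmem, ?_⟩
      funext j
      rw [hΦap]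
  -- CRT induction
  have hcrt : ∀ (T : Finset F) (v : Fin ℓ → Polynomial F),
      (∀ bv ∈ T, ∃ u ∈ MF, ∀ j, (X - C bv) ∣ (v j - u j)) →
      ∃ u ∈ MF, ∀ j, (∏ bv ∈ T, (X - C bv)) ∣ (v j - u j) := by
    intro T
    induction T using Finset.induction_on with
    | empty =>
      intro v _
      exact ⟨0, MF.zero_mem, fun j => by simp⟩
    | @insert a s ha ih =>
      intro v hv
      obtain ⟨u2, hu2M, hu2⟩ := hv a (Finset.mem_insert_self a s)
      obtain ⟨u1, hu1M, hu1⟩ := ih v (fun bv hb => hv bv (Finset.mem_insert_of_mem hb))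
      set g : Polynomial F := ∏ bv ∈ s, (X - C bv) with hg
      have hcop : IsCoprime (X - C a : Polynomial F) g := by
        refine (Polynomial.irreducible_X_sub_C a).coprime_iff_not_dvd.mpr ?_
        intro hdvd
        have hroot : g.eval a = 0 := by
          have := Polynomial.dvd_iff_isRoot.mp hdvd
          exact this
        rw [hg, Polynomial.eval_prod] at hroot
        obtain ⟨bv, hbv, h0⟩ := Finset.prod_eq_zero_iff.mp hroot
        have hab : a = bv := by
          have h0' := h0
          simp only [Polynomial.eval_sub, Polynomial.eval_X, Polynomial.eval_C] at h0'
          exact sub_eq_zero.mp h0'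
        exact ha (hab ▸ hbv)
      obtain ⟨p, q, hpq⟩ := hcop
      refine ⟨(p * (X - C a)) • u1 + (q * g) • u2,
        Submodule.add_mem _ (Submodule.smul_mem _ _ hu1M) (Submodule.smul_mem _ _ hu2M),
        fun j => ?_⟩
      obtain ⟨r1, hr1⟩ := hu1 j
      obtain ⟨r2, hr2⟩ := hu2 j
      rw [Finset.prod_insert ha]
      refine ⟨p * r1 + q * r2, ?_⟩
      have hpi : ((p * (X - C a)) • u1 + (q * g) • u2) j
          = p * (X - C a) * u1 j + q * g * u2 j := by
        simp [Pi.add_apply, Pi.smul_apply, smul_eq_mul]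
      rw [hpi]
      linear_combination (p * (X - C a)) * hr1 + (q * g) * hr2 - (v j) * hpq
  -- evaluation matrices
  set Aβ : F → Matrix (Fin ℓ) (Fin ℓ) F := fun bv => G.map (fun p => Polynomial.aeval bv p)
    with hAβ
  have hAβdet : ∀ bv : F, (Aβ bv).det = Polynomial.aeval bv G.det := by
    intro bv
    rw [hAβ]
    exact ((Polynomial.aeval bv).toRingHom.map_det G).symm
  -- forward evaluation
  have hforward : ∀ (v : Fin ℓ → Polynomial F) (bv : F), v ∈ MF →
      (fun j => (v j).eval bv) ∈ LinearMap.range (Aβ bv)ᵀ.mulVecLin := by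
    intro v bv hv
    rw [range_transpose_mulVecLin', Submodule.mem_span_range_iff_exists_fun]
    rw [hMF, Submodule.mem_span_range_iff_exists_fun] at hv
    obtain ⟨a, ha⟩ := hv
    refine ⟨fun i => (a i).eval bv, funext fun j => ?_⟩
    have hj := congrFun ha j
    simp only [Finset.sum_apply, Pi.smul_apply, smul_eq_mul] at hj ⊢
    rw [← hj, Polynomial.eval_finset_sum]
    refine Finset.sum_congr rfl fun i _ => ?_
    rw [Polynomial.eval_mul]
    congr 1
    rw [hAβ]
    simp [Matrix.map_apply, Polynomial.aeval_def, Polynomial.eval_map, hφ]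
  -- key equivalence for MF
  have hMFiff : ∀ v : Fin ℓ → Polynomial F,
      (v ∈ MF ↔ ∀ i : Fin t,
        (fun j => (v j).eval (β i)) ∈ LinearMap.range (Aβ (β i))ᵀ.mulVecLin) := by
    intro v
    constructor
    · intro hv i
      exact hforward v (β i) hv
    · intro hv
      have hroots : ∀ bv ∈ fF.roots.toFinset, ∃ u ∈ MF, ∀ j, (X - C bv) ∣ (v j - u j) := by
        intro bv _
        have hw : (fun j => (v j).eval bv) ∈ LinearMap.range (Aβ bv)ᵀ.mulVecLin := by
          by_cases h0 : Polynomial.aeval bv G.det = 0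
          · obtain ⟨i, rfl⟩ := hβall bv h0
            exact hv i
          · rw [range_top_of_det_ne_zero' _ (by rw [hAβdet]; exact h0)]
            trivial
        rw [range_transpose_mulVecLin', Submodule.mem_span_range_iff_exists_fun] at hw
        obtain ⟨cc, hcc⟩ := hw
        refine ⟨∑ i, (C (cc i) : Polynomial F) • (fun j => (G i j).map φ),
          Submodule.sum_mem _ fun i _ => Submodule.smul_mem _ _
            (Submodule.subset_span ⟨i, rfl⟩), fun j => ?_⟩
        rw [Polynomial.dvd_iff_isRoot]
        show ((v j - _)).eval bv = 0
        have hccj := congrFun hcc j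
        simp only [Finset.sum_apply, Pi.smul_apply, smul_eq_mul] at hccj
        rw [Polynomial.eval_sub, Finset.sum_apply, Polynomial.eval_finset_sum]
        have heach : ∀ i : Fin ℓ, ((C (cc i) : Polynomial F) • (fun j' => (G i j').map φ)) j
            = C (cc i) * (G i j).map φ := fun i => rfl
        have : ∑ i : Fin ℓ, (((C (cc i) : Polynomial F) • (fun j' => (G i j').map φ)) j).eval bv
            = ∑ i : Fin ℓ, cc i * (Aβ bv i j) := by
          refine Finset.sum_congr rfl fun i _ => ?_
          rw [heach, Polynomial.eval_mul, Polynomial.eval_C]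
          congr 1
          rw [hAβ]
          simp [Matrix.map_apply, Polynomial.aeval_def, Polynomial.eval_map, hφ]
        rw [this, ← hccj]
        ring
      obtain ⟨u, huM, hdvd⟩ := hcrt fF.roots.toFinset v hroots
      have hvu : v - u ∈ MF := hfF_dvd_mem _ (fun j => by
        have := hdvd j
        rwa [hprodroots] at this)
      have := MF.add_mem huM hvu
      simpa using this
  -- bridging ρ cpoly with M
  have hMiffMF : cpoly ∈ M ↔ (fun j => (cpoly j).map φ) ∈ MF :=
    ⟨fun h => hmapM _ h, fun h => hdescent _ h⟩
  -- evaluation of mapped cpoly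
  have heval : ∀ (bv : F) (j : Fin ℓ),
      ((cpoly j).map φ).eval bv = ∑ k : Fin m, φ (c k j) * bv ^ (k : ℕ) := by
    intro bv j
    rw [hcpoly]
    simp [Polynomial.map_sum, Polynomial.map_mul, Polynomial.map_pow, Polynomial.map_C,
      Polynomial.map_X, Polynomial.eval_finset_sum]
  -- per-eigenvalue perp description
  have hperp : ∀ i : Fin t,
      LinearMap.range (Aβ (β i))ᵀ.mulVecLin = LinearMap.ker (V i).mulVecLin := by
    intro i
    refine rowspace_eq_perp' (Aβ (β i)) (V i) (hVli i) ?_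
    rw [hVspan i]
    congr 1
  -- RHS bridging
  have hRHS : (H.mulVec (fun q : Fin m × Fin ℓ => φ (c q.1 q.2)) = 0)
      ↔ ∀ i : Fin t, (V i).mulVec (fun j => ((cpoly j).map φ).eval (β i)) = 0 := by
    have hentry : ∀ (i : Fin t) (r : Fin (n i)),
        H.mulVec (fun q : Fin m × Fin ℓ => φ (c q.1 q.2)) ⟨i, r⟩
          = (V i).mulVec (fun j => ((cpoly j).map φ).eval (β i)) r := by
      intro i r
      show ∑ q : Fin m × Fin ℓ, H ⟨i, r⟩ q * φ (c q.1 q.2)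
          = ∑ j : Fin ℓ, V i r j * ((cpoly j).map φ).eval (β i)
      rw [Fintype.sum_prod_type]
      rw [Finset.sum_comm]
      refine Finset.sum_congr rfl fun j _ => ?_
      rw [heval, Finset.mul_sum]
      refine Finset.sum_congr rfl fun k _ => ?_
      rw [hH]
      ring
    constructor
    · intro h i
      funext r
      rw [← hentry i r, h]
      rfl
    · intro h
      funext p
      obtain ⟨i, r⟩ := p
      rw [hentry i r, h i]
      rfl
  show ((fun j : Fin ℓ => Ideal.Quotient.mk I (cpoly j)) ∈ Code)
      ↔ (H.mulVec (fun q : Fin m × Fin ℓ => φ (c q.1 q.2)) = 0)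
  rw [hCodeIff, hMiffMF, hMFiff (fun j => (cpoly j).map φ), hRHS]
  refine forall_congr' fun i => ?_
  rw [hperp i]
  rw [LinearMap.mem_ker, Matrix.mulVecLin_apply]
end

section
/- Key step of the spectral bound: if c is a nonzero codeword of the λ-QT code C with weight ω < d(ℂ_P), where ℂ_P is the eigencode of the common eigenspace V_P of P, then for every nonzero row c_k of the m×ℓ array of c, the syndrome s_k = V_P c_k^T is nonzero, and the number of nonzero syndromes s_k satisfies 0 < #{k : s_k ≠ 0} ≤ ω. -/
open Polynomial

/-- The minimum distance (in `ℕ∞`, so `⊤` for the zero code) of a code given as a set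
of vectors: the least Hamming weight of a nonzero element. -/
noncomputable def setMinDist {ι : Type*} [Fintype ι] {K : Type*} [DecidableEq K] [Zero K]
    (Code : Set (ι → K)) : ℕ∞ :=
  sInf {w : ℕ∞ | ∃ u ∈ Code, u ≠ 0 ∧
    w = ((Finset.univ.filter fun j : ι => u j ≠ 0).card : ℕ∞)}

/-- (Key step of the spectral bound.) If `c` is a nonzero codeword of the λ-QT code `C`
with weight `ω < d(ℂ_P)`, where `ℂ_P` is the eigencode of the common eigenspace `V_P`
of `P` (with basis the rows of the matrix `V_P`), then every nonzero row `c_k` of the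
`m×ℓ` array of `c` has nonzero syndrome `s_k = V_P c_k^T`, and
`0 < #{k : s_k ≠ 0} ≤ ω`. -/
theorem qt_spectral_bound_key_step
    (K : Type*) [Field K] [Fintype K] [DecidableEq K]
    (m ℓ : ℕ) (hm : 0 < m) (hℓ : 0 < ℓ)
    (hgcd : Nat.gcd m (Fintype.card K) = 1) (lam : K) (hlam : lam ≠ 0)
    (F : Type*) [Field F] [DecidableEq F] [Algebra K F]
    (hsplit : Polynomial.Splits (((X : Polynomial K) ^ m - C lam).map (algebraMap K F)))
    (α ξ : F) (hα : α ^ m = algebraMap K F lam) (hξ : IsPrimitiveRoot ξ m)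
    (Omega : Finset F) (hOmega : Omega = (Finset.range m).image (fun k => α * ξ ^ k))
    (I : Ideal (Polynomial K)) (hI : I = Ideal.span {(X : Polynomial K) ^ m - C lam})
    (G : Matrix (Fin ℓ) (Fin ℓ) (Polynomial K))
    (hupper : ∀ i j : Fin ℓ, j < i → G i j = 0)
    (hdiv : ∀ j : Fin ℓ, G j j ∣ (X : Polynomial K) ^ m - C lam)
    (hdeg : ∀ i j : Fin ℓ, i < j → (G i j).degree < (G j j).degree)
    (hfull : ∀ i j : Fin ℓ, i ≠ j → G j j = (X : Polynomial K) ^ m - C lam → G i j = 0)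
    (M : Submodule (Polynomial K) (Fin ℓ → Polynomial K))
    (hM : M = Submodule.span (Polynomial K) (Set.range (fun i : Fin ℓ => G i)))
    (hMe : ∀ j : Fin ℓ,
      (((X : Polynomial K) ^ m - C lam) • (Pi.single j 1 : Fin ℓ → Polynomial K)) ∈ M)
    (Φ : (Fin ℓ → Polynomial K) →ₗ[K] (Fin ℓ → Polynomial K ⧸ I))
    (hΦ : Φ = LinearMap.pi (fun j : Fin ℓ =>
      (Ideal.Quotient.mkₐ K I).toLinearMap.comp
        (LinearMap.proj j : (Fin ℓ → Polynomial K) →ₗ[K] Polynomial K)))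
    (Code : Submodule K (Fin ℓ → Polynomial K ⧸ I))
    (hCode : Code = Submodule.map Φ (M.restrictScalars K))
    -- the eigenvalue set of the code
    (EV : Set F) (hEV : EV = {x : F | Polynomial.aeval x G.det = 0})
    -- P is a nonempty subset of the eigenvalues
    (P : Finset F) (hPne : P.Nonempty) (hPsub : ↑P ⊆ EV)
    -- the common eigenspace V_P, with basis the rows of the matrix VPmat
    (VP : Submodule F (Fin ℓ → F))
    (hVP : VP = ⨅ x ∈ P, LinearMap.ker (Matrix.toLin'
      (G.map (fun p => Polynomial.aeval x p))))
    (t : ℕ) (VPmat : Matrix (Fin t) (Fin ℓ) F)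
    (hVli : LinearIndependent F (fun r : Fin t => VPmat r))
    (hVspan : Submodule.span F (Set.range (fun r : Fin t => VPmat r)) = VP)
    -- the eigencode ℂ_P of V_P
    (ECode : Set (Fin ℓ → K))
    (hECode : ECode = {u : Fin ℓ → K |
      ∀ v ∈ VP, ∑ j : Fin ℓ, v j * algebraMap K F (u j) = 0})
    -- c is a nonzero codeword of weight ω < d(ℂ_P)
    (c : Fin m → Fin ℓ → K)
    (hc : (fun j : Fin ℓ =>
      Ideal.Quotient.mk I (∑ k : Fin m, C (c k j) * X ^ (k : ℕ))) ∈ Code)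
    (hcne : c ≠ 0)
    (ω : ℕ) (hω : ω = (Finset.univ.filter fun q : Fin m × Fin ℓ => c q.1 q.2 ≠ 0).card)
    (hωlt : (ω : ℕ∞) < setMinDist ECode) :
    (∀ k : Fin m, c k ≠ 0 →
        VPmat.mulVec (fun j : Fin ℓ => algebraMap K F (c k j)) ≠ 0) ∧
      0 < (Finset.univ.filter fun k : Fin m =>
            VPmat.mulVec (fun j : Fin ℓ => algebraMap K F (c k j)) ≠ 0).card ∧
      (Finset.univ.filter fun k : Fin m =>
            VPmat.mulVec (fun j : Fin ℓ => algebraMap K F (c k j)) ≠ 0).card ≤ ω := by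
  classical
  have hrowzero : ∀ k : Fin m, c k = 0 →
      VPmat.mulVec (fun j : Fin ℓ => algebraMap K F (c k j)) = 0 := by
    intro k hk
    have : (fun j : Fin ℓ => algebraMap K F (c k j)) = 0 := by
      funext j; simp [hk]
    rw [this, Matrix.mulVec_zero]
  have key : ∀ k : Fin m, c k ≠ 0 →
      VPmat.mulVec (fun j : Fin ℓ => algebraMap K F (c k j)) ≠ 0 := by
    intro k hk hzero
    -- the row c k lies in the eigencode
    have hmem : c k ∈ ECode := by
      rw [hECode]
      intro v hv
      set w : Fin ℓ → F := fun j => algebraMap K F (c k j) with hw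
      let L : (Fin ℓ → F) →ₗ[F] F :=
        { toFun := fun v => ∑ j, v j * w j
          map_add' := by
            intro x y
            simp [add_mul, Finset.sum_add_distrib]
          map_smul' := by
            intro a x
            simp [Finset.mul_sum, mul_assoc] }
      have hker : VP ≤ LinearMap.ker L := by
        rw [← hVspan, Submodule.span_le]
        rintro _ ⟨r, rfl⟩
        have := congrFun hzero r
        simpa [L, Matrix.mulVec, dotProduct] using this
      exact hker hv
    -- weight of the row is at most ω
    have hwle : (Finset.univ.filter fun j : Fin ℓ => c k j ≠ 0).card ≤ ω := by
      rw [hω]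
      apply Finset.card_le_card_of_injOn (fun j => (k, j))
      · intro j hj
        simp only [Finset.mem_filter, Finset.mem_univ, true_and] at hj ⊢
        simpa using hj
      · intro a _ b _ hab
        exact (Prod.mk.injEq _ _ _ _ ▸ hab).2
    have hdist : setMinDist ECode ≤
        ((Finset.univ.filter fun j : Fin ℓ => c k j ≠ 0).card : ℕ∞) :=
      sInf_le ⟨c k, hmem, hk, rfl⟩
    have : setMinDist ECode ≤ (ω : ℕ∞) :=
      hdist.trans (by exact_mod_cast hwle)
    exact absurd (lt_of_lt_of_le hωlt this) (lt_irrefl _)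
  refine ⟨key, ?_, ?_⟩
  · obtain ⟨k, hk⟩ : ∃ k, c k ≠ 0 := by
      by_contra h
      push_neg at h
      exact hcne (funext h)
    apply Finset.card_pos.mpr
    exact ⟨k, by simp [key k hk]⟩
  · rw [hω]
    have hne : ∀ k ∈ (Finset.univ.filter fun k : Fin m =>
        VPmat.mulVec (fun j : Fin ℓ => algebraMap K F (c k j)) ≠ 0), ∃ j, c k j ≠ 0 := by
      intro k hk
      simp only [Finset.mem_filter, Finset.mem_univ, true_and] at hk
      by_contra h
      push_neg at h
      exact hk (hrowzero k (funext h))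
    apply Finset.card_le_card_of_injOn (fun k =>
      if h : ∃ j, c k j ≠ 0 then ((k, h.choose) : Fin m × Fin ℓ) else (k, ⟨0, hℓ⟩))
    · intro k hk
      have h := hne k hk
      simp only [Finset.mem_filter, Finset.mem_univ, true_and]
      rw [dif_pos h]
      simpa using h.choose_spec
    · intro a _ b _ hab
      have h1 : ∀ k : Fin m,
          ((if h : ∃ j, c k j ≠ 0 then ((k, h.choose) : Fin m × Fin ℓ)
            else (k, ⟨0, hℓ⟩)).1) = k := by
        intro k; split <;> rfl
      have h2 := congrArg Prod.fst hab
      simp only at h2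
      rwa [h1, h1] at h2
end

section
/- Every nonzero element of the preimage C̃ ⊆ F_q[x]^ℓ of a λ-QT code, with respect to the reduced upper-triangular basis G̃(x), has the form (0,...,0,c_j(x),...,c_{ℓ-1}(x)) where c_j(x) ≠ 0 and g_{j,j}(x) divides c_j(x). -/
open Polynomial

/-- Every nonzero element of the preimage `C̃ ⊆ K[x]^ℓ` of a λ-QT code, with respect to
the reduced upper-triangular basis `G̃(x)`, has the form
`(0, …, 0, c_j(x), …, c_{ℓ-1}(x))` where `c_j(x) ≠ 0` and `g_{j,j}(x) ∣ c_j(x)`. -/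
theorem qt_preimage_element_shape
    (K : Type*) [Field K] [Fintype K] (m ℓ : ℕ) (hm : 0 < m) (hℓ : 0 < ℓ)
    (hgcd : Nat.gcd m (Fintype.card K) = 1) (lam : K) (hlam : lam ≠ 0)
    (G : Matrix (Fin ℓ) (Fin ℓ) (Polynomial K))
    (hupper : ∀ i j : Fin ℓ, j < i → G i j = 0)
    (hdiv : ∀ j : Fin ℓ, G j j ∣ (X : Polynomial K) ^ m - C lam)
    (hdeg : ∀ i j : Fin ℓ, i < j → (G i j).degree < (G j j).degree)
    (hfull : ∀ i j : Fin ℓ, i ≠ j → G j j = (X : Polynomial K) ^ m - C lam → G i j = 0)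
    (M : Submodule (Polynomial K) (Fin ℓ → Polynomial K))
    (hM : M = Submodule.span (Polynomial K) (Set.range (fun i : Fin ℓ => G i)))
    (hMe : ∀ j : Fin ℓ,
      (((X : Polynomial K) ^ m - C lam) • (Pi.single j 1 : Fin ℓ → Polynomial K)) ∈ M)
    (c : Fin ℓ → Polynomial K) (hc : c ∈ M) (hcne : c ≠ 0) :
    ∃ j : Fin ℓ, (∀ i : Fin ℓ, i < j → c i = 0) ∧ c j ≠ 0 ∧ G j j ∣ c j := by
  classical
  subst hM
  obtain ⟨a, ha⟩ := (Submodule.mem_span_range_iff_exists_fun _).mp hc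
  have hne : (X : Polynomial K) ^ m - C lam ≠ 0 := by
    intro h
    have h2 := congrArg (fun p => Polynomial.coeff p m) h
    simp [coeff_X_pow, Polynomial.coeff_C, hm.ne'] at h2
  have hGne : ∀ j : Fin ℓ, G j j ≠ 0 := fun j h =>
    hne (zero_dvd_iff.mp (h ▸ hdiv j))
  have hc' : ∀ j : Fin ℓ, c j = ∑ i, a i * G i j := by
    intro j
    rw [← ha]
    simp [Finset.sum_apply]
  -- if all entries up to i vanish, then a i = 0
  have A : ∀ n : ℕ, ∀ i : Fin ℓ, (i : ℕ) = n →
      (∀ k : Fin ℓ, k ≤ i → c k = 0) → a i = 0 := by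
    intro n
    induction n using Nat.strong_induction_on with
    | _ n IH =>
      intro i hi hk
      have hci : c i = a i * G i i := by
        rw [hc' i, Finset.sum_eq_single i]
        · intro k _ hki
          rcases lt_or_gt_of_ne hki with h | h
          · have hak : a k = 0 := by
              refine IH (k : ℕ) (by omega) k rfl ?_
              exact fun k' hk' => hk k' (le_trans hk' h.le)
            rw [hak, zero_mul]
          · exact mul_eq_zero_of_right _ (hupper k i h)
        · intro h; exact absurd (Finset.mem_univ i) h
      have h0 : a i * G i i = 0 := hci.symm.trans (hk i le_rfl)
      exact (mul_eq_zero.mp h0).resolve_right (hGne i)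
  -- find the minimal nonzero coordinate
  have hex : ∃ n : ℕ, ∃ h : n < ℓ, c ⟨n, h⟩ ≠ 0 := by
    obtain ⟨j, hj⟩ := Function.ne_iff.mp hcne
    exact ⟨(j : ℕ), j.isLt, by simpa using hj⟩
  obtain ⟨hlt, hne0⟩ := Nat.find_spec hex
  set n0 := Nat.find hex with hn0
  refine ⟨⟨n0, hlt⟩, ?_, hne0, ?_⟩
  · intro i hi
    by_contra hci
    exact Nat.find_min hex (show (i : ℕ) < n0 from hi) ⟨i.isLt, by simpa using hci⟩
  · have hzero : ∀ i : Fin ℓ, i < (⟨n0, hlt⟩ : Fin ℓ) → c i = 0 := by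
      intro i hi
      by_contra hci
      exact Nat.find_min hex (show (i : ℕ) < n0 from hi) ⟨i.isLt, by simpa using hci⟩
    have : c ⟨n0, hlt⟩ = a ⟨n0, hlt⟩ * G ⟨n0, hlt⟩ ⟨n0, hlt⟩ := by
      rw [hc' _, Finset.sum_eq_single (⟨n0, hlt⟩ : Fin ℓ)]
      · intro k _ hki
        rcases lt_or_gt_of_ne hki with h | h
        · have hak : a k = 0 := by
            refine A (k : ℕ) k rfl ?_
            exact fun k' hk' => hzero k' (lt_of_le_of_lt hk' h)
          rw [hak, zero_mul]
        · exact mul_eq_zero_of_right _ (hupper k _ h)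
      · intro h; exact absurd (Finset.mem_univ _) h
    rw [this]
    exact Dvd.intro_left _ rfl
end
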